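/- arXiv:1607.00798 — 6 statements merged into one kernel-verified Lean document; each statement's English description precedes it below -/
import Mathlib

section
/- For every integer N divisible by 4 and every integer a coprime to N, the simplex with vertices e_1, e_2, e_3, e_4 and (2, N/2 - 1, a, N/2 - a) in \mathbb{R}^4 is an empty simplex, i.e., its only lattice points are its five vertices. -/
open Set MeasureTheory

noncomputable section

/-- Cast an integer point to a real point. -/
def ratl {d : ℕ} (x : Fin d → ℤ) : Fin d → ℝ := fun i => (x i : ℝ)

/-- A lattice polytope: convex hull of finitely many integer points. -/
def IsLatticePolytope {d : ℕ} (P : Set (Fin d → ℝ)) : Prop :=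
  ∃ V : Finset (Fin d → ℤ), V.Nonempty ∧ P = convexHull ℝ (ratl '' ↑V)

/-- Width of a set with respect to an integer linear functional. -/
def widthF {d : ℕ} (P : Set (Fin d → ℝ)) (l : Fin d → ℤ) : ℝ :=
  sSup ((fun pq : (Fin d → ℝ) × (Fin d → ℝ) =>
    |∑ i, (l i : ℝ) * (pq.1 i - pq.2 i)|) '' (P ×ˢ P))

/-- Lattice width: min over nonzero integer functionals. -/
def latWidth {d : ℕ} (P : Set (Fin d → ℝ)) : ℝ :=
  sInf (Set.range fun l : {l : Fin d → ℤ // l ≠ 0} => widthF P l.1)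

/-- Number of lattice points of a set. -/
def latticeSize {d : ℕ} (P : Set (Fin d → ℝ)) : ℕ :=
  {x : Fin d → ℤ | ratl x ∈ P}.ncard

/-- Integer affine map, acting on real points. -/
def affMap {d : ℕ} (A : Matrix (Fin d) (Fin d) ℤ) (b : Fin d → ℤ) (x : Fin d → ℝ) :
    Fin d → ℝ :=
  (A.map (Int.cast : ℤ → ℝ)).mulVec x + ratl b

/-- Unimodular equivalence of subsets of ℝ^d. -/
def UnimodEquiv {d : ℕ} (P P' : Set (Fin d → ℝ)) : Prop :=
  ∃ (A : Matrix (Fin d) (Fin d) ℤ) (b : Fin d → ℤ), IsUnit A.det ∧ affMap A b '' P = P'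

/-- Projection forgetting the last coordinate. -/
def proj {d : ℕ} (x : Fin (d+1) → ℝ) : Fin d → ℝ := fun i => x i.castSucc

/-- Equivalence of lifts: a unimodular equivalence commuting with the projection. -/
def LiftEquiv {d : ℕ} (P₁ P₂ : Set (Fin (d+1) → ℝ)) : Prop :=
  ∃ (A : Matrix (Fin (d+1)) (Fin (d+1)) ℤ) (b : Fin (d+1) → ℤ), IsUnit A.det ∧
    affMap A b '' P₁ = P₂ ∧ ∀ x ∈ P₁, proj (affMap A b x) = proj x

lemma lin4 (c : Fin 4 → ℝ) : IsLinearMap ℝ (fun y : Fin 4 → ℝ => ∑ i, c i * y i) := by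
  constructor
  · intro y z; simp [Pi.add_apply, mul_add, Finset.sum_add_distrib]
  · intro t y; simp [Pi.smul_apply, smul_eq_mul, Finset.mul_sum, mul_left_comm, mul_comm, mul_assoc]

lemma hull_half {S : Set (Fin 4 → ℝ)} (c : Fin 4 → ℝ) (r : ℝ)
    (h : ∀ y ∈ S, r ≤ ∑ i, c i * y i) {x : Fin 4 → ℝ} (hx : x ∈ convexHull ℝ S) :
    r ≤ ∑ i, c i * x i :=
  convexHull_min h (convex_halfSpace_ge (lin4 c) r) hx

lemma hull_ineq (m a : ℤ) (x : Fin 4 → ℤ)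
    (hx : ratl x ∈ convexHull ℝ (ratl ''
      ({![1,0,0,0], ![0,1,0,0], ![0,0,1,0], ![0,0,0,1], ![2, m - 1, a, m - a]} :
        Set (Fin 4 → ℤ))))
    (c0 c1 c2 c3 r : ℤ)
    (h0 : r ≤ c0) (h1 : r ≤ c1) (h2 : r ≤ c2) (h3 : r ≤ c3)
    (h4 : r ≤ 2*c0 + (m-1)*c1 + a*c2 + (m-a)*c3) :
    r ≤ c0 * x 0 + c1 * x 1 + c2 * x 2 + c3 * x 3 := by
  have H := hull_half (c := ![(c0:ℝ), (c1:ℝ), (c2:ℝ), (c3:ℝ)]) (r := (r:ℝ)) ?_ hx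
  · simp only [Fin.sum_univ_four, ratl, Matrix.cons_val_zero, Matrix.cons_val_one,
      Matrix.head_cons, Matrix.cons_val_two, Matrix.tail_cons, Matrix.cons_val_three] at H
    exact_mod_cast H
  · rintro y ⟨z, hz, rfl⟩
    simp only [Set.mem_insert_iff, Set.mem_singleton_iff] at hz
    rcases hz with rfl | rfl | rfl | rfl | rfl <;>
      · simp only [Fin.sum_univ_four, ratl, Matrix.cons_val_zero, Matrix.cons_val_one,
          Matrix.head_cons, Matrix.cons_val_two, Matrix.tail_cons, Matrix.cons_val_three]
        norm_cast
        linarith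

lemma nonneg_fac {m t : ℤ} (hm : 0 < m) (h : 0 ≤ 2*m*t) : 0 ≤ t := by
  by_contra h'
  push_neg at h'
  nlinarith [mul_pos hm (by omega : (0:ℤ) < -t)]

lemma vec_ext (x : Fin 4 → ℤ) (p q r s : ℤ)
    (h0 : x 0 = p) (h1 : x 1 = q) (h2 : x 2 = r) (h3 : x 3 = s) : x = ![p,q,r,s] := by
  funext i
  fin_cases i <;> simp [h0, h1, h2, h3]


/-- The empty 4-simplices of non-prime determinant N ≡ 0 (mod 4): the simplex with
vertices e₁, e₂, e₃, e₄ and (2, N/2 - 1, a, N/2 - a) has no lattice points other than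
its five vertices. -/
theorem family_mod4_empty (N a : ℤ) (hN4 : (4 : ℤ) ∣ N) (hNpos : 0 < N)
    (hcop : IsCoprime a N) (x : Fin 4 → ℤ)
    (hx : ratl x ∈ convexHull ℝ (ratl ''
      ({![1,0,0,0], ![0,1,0,0], ![0,0,1,0], ![0,0,0,1], ![2, N/2 - 1, a, N/2 - a]} :
        Set (Fin 4 → ℤ)))) :
    x ∈ ({![1,0,0,0], ![0,1,0,0], ![0,0,1,0], ![0,0,0,1], ![2, N/2 - 1, a, N/2 - a]} :
        Set (Fin 4 → ℤ)) := by
  set m : ℤ := N / 2 with hmdef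
  clear_value m
  have hNm : N = 2 * m := by omega
  have hme : 2 ∣ m := by omega
  have hm0 : 0 < m := by omega
  -- six halfspace bounds
  have hA := hull_ineq m a x hx 1 1 1 1 1 le_rfl le_rfl le_rfl le_rfl (by linarith)
  have hB := hull_ineq m a x hx (-1) (-1) (-1) (-1) (-(2*m)-1)
    (by linarith) (by linarith) (by linarith) (by linarith) (le_of_eq (by ring))
  have hC := hull_ineq m a x hx (2*m-2) (-2) (-2) (-2) (-2)
    (by linarith) le_rfl le_rfl le_rfl (le_of_eq (by ring))
  have hD := hull_ineq m a x hx (1-m) (m+1) (1-m) (1-m) (1-m)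
    le_rfl (by linarith) le_rfl le_rfl (le_of_eq (by ring))
  have hE := hull_ineq m a x hx (-a) (-a) (2*m-a) (-a) (-a)
    le_rfl le_rfl (by linarith) le_rfl (le_of_eq (by ring))
  have hF := hull_ineq m a x hx (a-m) (a-m) (a-m) (a+m) (a-m)
    le_rfl le_rfl le_rfl (by linarith) (le_of_eq (by ring))
  set k : ℤ := x 0 + x 1 + x 2 + x 3 - 1 with hkdef
  clear_value k
  have hk0 : 0 ≤ k := by linarith
  have hk2m : k ≤ 2*m := by linarith
  have hs1 : 0 ≤ 2*m*(x 0) - 2*k := by linarith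
  have hs2 : 0 ≤ 2*m*(x 1) - (m-1)*k := by rw [hkdef]; linarith
  have hs3 : 0 ≤ 2*m*(x 2) - a*k := by rw [hkdef]; linarith
  have hs4 : 0 ≤ 2*m*(x 3) - (m-a)*k := by rw [hkdef]; linarith
  have hsid : (2*m*(x 0) - 2*k) + (2*m*(x 1) - (m-1)*k) + (2*m*(x 2) - a*k)
      + (2*m*(x 3) - (m-a)*k) = 2*m - k := by rw [hkdef]; ring
  simp only [Set.mem_insert_iff, Set.mem_singleton_iff]
  rcases eq_or_lt_of_le hk0 with hkz | hkpos
  · -- k = 0 : x is a standard basis vector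
    have hz : x 0 + x 1 + x 2 + x 3 = 1 := by omega
    rw [← hkz] at hs1 hs2 hs3 hs4
    have hx0 : 0 ≤ x 0 := nonneg_fac hm0 (by linarith)
    have hx1 : 0 ≤ x 1 := nonneg_fac hm0 (by linarith)
    have hx2 : 0 ≤ x 2 := nonneg_fac hm0 (by linarith)
    have hx3 : 0 ≤ x 3 := nonneg_fac hm0 (by linarith)
    have hcases : (x 0 = 1 ∧ x 1 = 0 ∧ x 2 = 0 ∧ x 3 = 0) ∨
        (x 0 = 0 ∧ x 1 = 1 ∧ x 2 = 0 ∧ x 3 = 0) ∨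
        (x 0 = 0 ∧ x 1 = 0 ∧ x 2 = 1 ∧ x 3 = 0) ∨
        (x 0 = 0 ∧ x 1 = 0 ∧ x 2 = 0 ∧ x 3 = 1) := by omega
    rcases hcases with ⟨e0,e1,e2,e3⟩ | ⟨e0,e1,e2,e3⟩ | ⟨e0,e1,e2,e3⟩ | ⟨e0,e1,e2,e3⟩
    · exact Or.inl (vec_ext x _ _ _ _ e0 e1 e2 e3)
    · exact Or.inr (Or.inl (vec_ext x _ _ _ _ e0 e1 e2 e3))
    · exact Or.inr (Or.inr (Or.inl (vec_ext x _ _ _ _ e0 e1 e2 e3)))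
    · exact Or.inr (Or.inr (Or.inr (Or.inl (vec_ext x _ _ _ _ e0 e1 e2 e3))))
  · rcases eq_or_lt_of_le hk2m with hktop | hklt
    · -- k = 2m : x is the fifth vertex
      have h2m : (2*m : ℤ) ≠ 0 := by omega
      have z1 : 2*m*(x 0) - 2*k = 0 := by linarith
      have z2 : 2*m*(x 1) - (m-1)*k = 0 := by linarith
      have z3 : 2*m*(x 2) - a*k = 0 := by linarith
      have z4 : 2*m*(x 3) - (m-a)*k = 0 := by linarith
      have e0 : x 0 = 2 := by
        have : 2*m*(x 0) = 2*m*2 := by linarith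
        exact mul_left_cancel₀ h2m this
      have e1 : x 1 = m - 1 := by
        have : 2*m*(x 1) = 2*m*(m-1) := by linear_combination z2 + (m-1)*hktop
        exact mul_left_cancel₀ h2m this
      have e2 : x 2 = a := by
        have : 2*m*(x 2) = 2*m*a := by linear_combination z3 + a*hktop
        exact mul_left_cancel₀ h2m this
      have e3 : x 3 = m - a := by
        have : 2*m*(x 3) = 2*m*(m-a) := by linear_combination z4 + (m-a)*hktop
        exact mul_left_cancel₀ h2m this
      exact Or.inr (Or.inr (Or.inr (Or.inr (vec_ext x _ _ _ _ e0 e1 e2 e3))))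
    · -- 0 < k < 2m : impossible
      exfalso
      rcases Int.even_or_odd k with ⟨j, hj⟩ | ⟨j, hj⟩
      · -- k even
        have ht : (2*m*(x 2) - a*k) + (2*m*(x 3) - (m-a)*k) = 2*m*(x 2 + x 3 - j) := by
          linear_combination (-m)*hj
        have hub : 2*m*(x 2 + x 3 - j) ≤ 2*m - k := by linarith
        have hlb : 0 ≤ 2*m*(x 2 + x 3 - j) := by linarith
        have hteq : x 2 + x 3 - j = 0 := by
          rcases lt_trichotomy (x 2 + x 3 - j) 0 with h | h | h
          · have h' : x 2 + x 3 - j ≤ -1 := by omega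
            have := mul_le_mul_of_nonneg_left h' (show (0:ℤ) ≤ 2*m by linarith)
            linarith
          · exact h
          · have h' : 1 ≤ x 2 + x 3 - j := by omega
            have := mul_le_mul_of_nonneg_left h' (show (0:ℤ) ≤ 2*m by linarith)
            linarith
        have hz3 : 2*m*(x 2) - a*k = 0 := by
          rw [hteq, mul_zero] at ht; linarith
        have hdvd : N ∣ a * k := by rw [hNm]; exact ⟨x 2, by linarith⟩
        have hNk : N ∣ k := (hcop.symm).dvd_of_dvd_mul_left hdvd
        have := Int.le_of_dvd hkpos hNk
        omega
      · -- k odd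
        have hu : (2*m*(x 2) - a*k) + (2*m*(x 3) - (m-a)*k) - m
            = 2*m*(x 2 + x 3 - j - 1) := by linear_combination (-m)*hj
        have hub : 2*m*(x 2 + x 3 - j - 1) ≤ m - k := by linarith
        have hlb : -m ≤ 2*m*(x 2 + x 3 - j - 1) := by linarith
        have hueq : x 2 + x 3 - j - 1 = 0 := by
          rcases lt_trichotomy (x 2 + x 3 - j - 1) 0 with h | h | h
          · have h' : x 2 + x 3 - j - 1 ≤ -1 := by omega
            have := mul_le_mul_of_nonneg_left h' (show (0:ℤ) ≤ 2*m by linarith)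
            linarith
          · exact h
          · have h' : 1 ≤ x 2 + x 3 - j - 1 := by omega
            have := mul_le_mul_of_nonneg_left h' (show (0:ℤ) ≤ 2*m by linarith)
            linarith
        have hs34 : (2*m*(x 2) - a*k) + (2*m*(x 3) - (m-a)*k) = m := by
          rw [hueq, mul_zero] at hu; linarith
        -- s1 + s2 = m - k, so k ≤ m
        have hklem : k ≤ m := by linarith
        have hw : (2*m*(x 1) - (m-1)*k) - (k + m) = 2*m*(x 1 - j - 1) := by
          linear_combination (-m)*hj
        have hwub : 2*m*(x 1 - j - 1) ≤ -2*k := by linarith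
        have hwneg : x 1 - j - 1 ≤ -1 := by
          rcases lt_trichotomy (x 1 - j - 1) 0 with h | h | h
          · omega
          · exfalso; rw [h, mul_zero] at hwub; linarith
          · exfalso
            have h' : 1 ≤ x 1 - j - 1 := by omega
            have := mul_le_mul_of_nonneg_left h' (show (0:ℤ) ≤ 2*m by linarith)
            linarith
        have := mul_le_mul_of_nonneg_left hwneg (show (0:ℤ) ≤ 2*m by linarith)
        -- 2m(x1-j-1) ≤ -2m, and ≥ -(k+m) from hs2, so m ≤ k
        have hmk : m ≤ k := by linarith
        omega
end
end

section
/- For each lattice dimension d and size n, the threshold width is monotone in n: w^\infty(d,n) \le w^\infty(d,n+1). Concretely: if for some W there are infinitely many pairwise non-equivalent lattice d-polytopes of size n and width exactly W, then there are infinitely many pairwise non-equivalent lattice d-polytopes of size n+1 and width exactly W. -/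
open Set MeasureTheory Topology Filter

noncomputable section

lemma ratl_inj {d : ℕ} : Function.Injective (ratl (d := d)) := by
  intro x y h
  funext i
  have := congrFun h i
  simpa [ratl] using this

lemma latt_finite_ball {d : ℕ} (R : ℝ) :
    {x : Fin d → ℤ | ratl x ∈ Metric.closedBall (0 : Fin d → ℝ) R}.Finite := by
  have : {x : Fin d → ℤ | ratl x ∈ Metric.closedBall (0 : Fin d → ℝ) R} ⊆
      ↑(Finset.Icc (fun _ : Fin d => (-⌈R⌉ : ℤ)) (fun _ => ⌈R⌉)) := by
    intro x hx
    simp only [Metric.mem_closedBall, dist_zero_right, mem_setOf_eq] at hx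
    simp only [Finset.coe_Icc, Set.mem_Icc]
    constructor <;> intro i
    · have h1 : |(x i : ℝ)| ≤ R := by
        have := norm_le_pi_norm (ratl x) i
        simpa [ratl] using this.trans hx
      have h2 : (-R : ℝ) ≤ (x i : ℝ) := by
        have := abs_le.1 h1; linarith [this.1]
      have : (-(⌈R⌉ : ℝ)) ≤ (x i : ℝ) := le_trans (by simpa using neg_le_neg (Int.le_ceil R)) h2
      exact_mod_cast this
    · have h1 : |(x i : ℝ)| ≤ R := by
        have := norm_le_pi_norm (ratl x) i
        simpa [ratl] using this.trans hx
      have h2 : (x i : ℝ) ≤ R := (abs_le.1 h1).2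
      have : (x i : ℝ) ≤ (⌈R⌉ : ℝ) := h2.trans (Int.le_ceil R)
      exact_mod_cast this
  exact Set.Finite.subset (Finset.finite_toSet _) this

lemma IsLatticePolytope.isCompact {d : ℕ} {P : Set (Fin d → ℝ)} (hP : IsLatticePolytope P) :
    IsCompact P := by
  obtain ⟨V, -, rfl⟩ := hP
  exact ((V.finite_toSet).image ratl).isCompact_convexHull ℝ

lemma IsLatticePolytope.convex {d : ℕ} {P : Set (Fin d → ℝ)} (hP : IsLatticePolytope P) :
    Convex ℝ P := by
  obtain ⟨V, -, rfl⟩ := hP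
  exact convex_convexHull ℝ _

lemma IsLatticePolytope.subset_ball {d : ℕ} {P : Set (Fin d → ℝ)} (hP : IsLatticePolytope P) :
    ∃ R : ℝ, 0 ≤ R ∧ P ⊆ Metric.closedBall (0 : Fin d → ℝ) R := by
  obtain ⟨R, hR⟩ := hP.isCompact.isBounded.subset_closedBall (0 : Fin d → ℝ)
  exact ⟨max R 0, le_max_right _ _, hR.trans (Metric.closedBall_subset_closedBall (le_max_left _ _))⟩

lemma IsLatticePolytope.latt_finite {d : ℕ} {P : Set (Fin d → ℝ)} (hP : IsLatticePolytope P) :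
    {x : Fin d → ℤ | ratl x ∈ P}.Finite := by
  obtain ⟨R, -, hR⟩ := hP.subset_ball
  exact (latt_finite_ball R).subset (fun x hx => hR hx)

lemma IsLatticePolytope.eq_hull_latt {d : ℕ} {P : Set (Fin d → ℝ)} (hP : IsLatticePolytope P) :
    P = convexHull ℝ (ratl '' {x : Fin d → ℤ | ratl x ∈ P}) := by
  obtain ⟨V, hVne, hV⟩ := hP
  apply le_antisymm
  · conv_lhs => rw [hV]
    apply convexHull_mono
    intro y hy
    obtain ⟨v, hv, rfl⟩ := hy
    exact ⟨v, by rw [hV]; exact subset_convexHull ℝ _ ⟨v, hv, rfl⟩, rfl⟩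
  · apply convexHull_min
    · intro y hy
      obtain ⟨v, hv, rfl⟩ := hy
      exact hv
    · exact IsLatticePolytope.convex ⟨V, hVne, hV⟩


def flin {d : ℕ} (l : Fin d → ℤ) : (Fin d → ℝ) →ₗ[ℝ] ℝ where
  toFun := fun x => ∑ i, (l i : ℝ) * x i
  map_add' := by intro x y; simp [mul_add, Finset.sum_add_distrib]
  map_smul' := by
    intro c x
    simp only [Pi.smul_apply, smul_eq_mul, RingHom.id_apply, Finset.mul_sum]
    congr 1; funext i; ring

lemma widthF_def {d : ℕ} (P : Set (Fin d → ℝ)) (l : Fin d → ℤ) :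
    widthF P l = sSup ((fun pq : (Fin d → ℝ) × (Fin d → ℝ) =>
      |flin l pq.1 - flin l pq.2|) '' (P ×ˢ P)) := by
  unfold widthF
  congr 1
  apply congrArg (· '' _)
  funext pq
  simp only [flin, LinearMap.coe_mk, AddHom.coe_mk, ← Finset.sum_sub_distrib]
  congr 1; apply Finset.sum_congr rfl; intro i _; ring

lemma bddAbove_widthset {d : ℕ} {P : Set (Fin d → ℝ)} {l : Fin d → ℤ} {m M : ℝ}
    (hm : ∀ x ∈ P, m ≤ flin l x) (hM : ∀ x ∈ P, flin l x ≤ M) :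
    ∀ y ∈ ((fun pq : (Fin d → ℝ) × (Fin d → ℝ) =>
      |flin l pq.1 - flin l pq.2|) '' (P ×ˢ P)), y ≤ M - m := by
  rintro y ⟨⟨p, q⟩, hpq, rfl⟩
  obtain ⟨hp, hq⟩ := Set.mem_prod.1 hpq
  rw [abs_le]
  constructor <;> simp only <;> nlinarith [hm p hp, hM p hp, hm q hq, hM q hq]

lemma widthF_le {d : ℕ} {P : Set (Fin d → ℝ)} {l : Fin d → ℤ} {m M : ℝ}
    (hne : P.Nonempty) (hm : ∀ x ∈ P, m ≤ flin l x) (hM : ∀ x ∈ P, flin l x ≤ M) :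
    widthF P l ≤ M - m := by
  rw [widthF_def]
  apply csSup_le
  · obtain ⟨p, hp⟩ := hne
    exact ⟨_, ⟨(p, p), Set.mem_prod.2 ⟨hp, hp⟩, rfl⟩⟩
  · exact bddAbove_widthset hm hM

lemma le_widthF {d : ℕ} {P : Set (Fin d → ℝ)} {l : Fin d → ℤ} {m M : ℝ}
    (hm : ∀ x ∈ P, m ≤ flin l x) (hM : ∀ x ∈ P, flin l x ≤ M)
    {p q : Fin d → ℝ} (hp : p ∈ P) (hq : q ∈ P) :
    |flin l p - flin l q| ≤ widthF P l := by
  rw [widthF_def]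
  exact le_csSup ⟨M - m, fun y hy => bddAbove_widthset hm hM y hy⟩
    ⟨(p, q), Set.mem_prod.2 ⟨hp, hq⟩, rfl⟩

lemma widthF_eq {d : ℕ} {P : Set (Fin d → ℝ)} {l : Fin d → ℤ} {m M : ℝ}
    (hm : ∀ x ∈ P, m ≤ flin l x) (hM : ∀ x ∈ P, flin l x ≤ M)
    (hma : ∃ p ∈ P, flin l p = M) (hmi : ∃ q ∈ P, flin l q = m) :
    widthF P l = M - m := by
  obtain ⟨p, hp, hpv⟩ := hma
  obtain ⟨q, hq, hqv⟩ := hmi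
  refine le_antisymm (widthF_le ⟨p, hp⟩ hm hM) ?_
  have := le_widthF hm hM hp hq
  rw [hpv, hqv, abs_of_nonneg (by linarith [hm p hp, hM q hq])] at this
  exact this

lemma widthF_mono {d : ℕ} {P Q : Set (Fin d → ℝ)} {l : Fin d → ℤ} {m M : ℝ}
    (hPQ : P ⊆ Q) (hne : P.Nonempty)
    (hm : ∀ x ∈ Q, m ≤ flin l x) (hM : ∀ x ∈ Q, flin l x ≤ M) :
    widthF P l ≤ widthF Q l := by
  rw [widthF_def, widthF_def]
  apply csSup_le_csSup
  · exact ⟨M - m, fun y hy => bddAbove_widthset hm hM y hy⟩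
  · obtain ⟨p, hp⟩ := hne
    exact ⟨_, ⟨(p, p), Set.mem_prod.2 ⟨hp, hp⟩, rfl⟩⟩
  · apply Set.image_mono
    exact Set.prod_mono hPQ hPQ

lemma least_of_nat_vals {S : Set ℝ} (hne : S.Nonempty)
    (hnat : ∀ x ∈ S, ∃ n : ℕ, x = n) :
    ∃ x₀ ∈ S, (∀ x ∈ S, x₀ ≤ x) ∧ sInf S = x₀ := by
  have hKne : {n : ℕ | (n : ℝ) ∈ S}.Nonempty := by
    obtain ⟨x, hx⟩ := hne
    obtain ⟨n, rfl⟩ := hnat x hx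
    exact ⟨n, hx⟩
  set n₀ := sInf {n : ℕ | (n : ℝ) ∈ S} with hn₀
  have hmem : (n₀ : ℝ) ∈ S := Nat.sInf_mem hKne
  have hlb : ∀ x ∈ S, (n₀ : ℝ) ≤ x := by
    intro x hx
    obtain ⟨n, rfl⟩ := hnat x hx
    exact_mod_cast Nat.sInf_le hx
  exact ⟨_, hmem, hlb, (IsLeast.csInf_eq ⟨hmem, hlb⟩)⟩


lemma flin_ratl {d : ℕ} (l v : Fin d → ℤ) : flin l (ratl v) = ((∑ i, l i * v i : ℤ) : ℝ) := by
  simp [flin, ratl]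

lemma IsLatticePolytope.exists_flin_bounds {d : ℕ} {P : Set (Fin d → ℝ)}
    (hP : IsLatticePolytope P) (l : Fin d → ℤ) :
    ∃ a b : Fin d → ℤ, ratl a ∈ P ∧ ratl b ∈ P ∧
      (∀ x ∈ P, flin l (ratl a) ≤ flin l x) ∧ (∀ x ∈ P, flin l x ≤ flin l (ratl b)) := by
  obtain ⟨V, hVne, rfl⟩ := hP
  obtain ⟨a, ha, hamin⟩ := V.exists_min_image (fun v => flin l (ratl v)) hVne
  obtain ⟨b, hb, hbmax⟩ := V.exists_max_image (fun v => flin l (ratl v)) hVne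
  refine ⟨a, b, subset_convexHull ℝ _ ⟨a, ha, rfl⟩, subset_convexHull ℝ _ ⟨b, hb, rfl⟩, ?_, ?_⟩
  · intro x hx
    refine convexHull_min ?_ (convex_halfSpace_ge ⟨(flin l).map_add, (flin l).map_smul⟩ _) hx
    rintro y ⟨v, hv, rfl⟩
    exact hamin v hv
  · intro x hx
    refine convexHull_min ?_ (convex_halfSpace_le ⟨(flin l).map_add, (flin l).map_smul⟩ _) hx
    rintro y ⟨v, hv, rfl⟩
    exact hbmax v hv

lemma IsLatticePolytope.widthF_nat {d : ℕ} {P : Set (Fin d → ℝ)}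
    (hP : IsLatticePolytope P) (l : Fin d → ℤ) :
    ∃ n : ℕ, widthF P l = n := by
  obtain ⟨a, b, haP, hbP, hmin, hmax⟩ := hP.exists_flin_bounds l
  have := widthF_eq hmin hmax ⟨ratl b, hbP, rfl⟩ ⟨ratl a, haP, rfl⟩
  rw [this, flin_ratl, flin_ratl]
  have hab : (∑ i, l i * a i : ℤ) ≤ (∑ i, l i * b i : ℤ) := by
    have := hmin (ratl b) hbP
    rw [flin_ratl, flin_ratl] at this
    exact_mod_cast this
  refine ⟨((∑ i, l i * b i : ℤ) - (∑ i, l i * a i : ℤ)).toNat, ?_⟩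
  have h2 : ((((∑ i, l i * b i : ℤ) - (∑ i, l i * a i : ℤ)).toNat : ℤ) : ℝ)
      = ((∑ i, l i * b i : ℤ) : ℝ) - ((∑ i, l i * a i : ℤ) : ℝ) := by
    rw [Int.toNat_of_nonneg (by omega)]
    push_cast; ring
  rw [← h2]
  norm_cast

lemma latWidth_attained {d : ℕ} {P : Set (Fin d → ℝ)}
    (hd : 0 < d) (hP : IsLatticePolytope P) :
    ∃ l : Fin d → ℤ, l ≠ 0 ∧ widthF P l = latWidth P ∧
      ∀ l' : Fin d → ℤ, l' ≠ 0 → latWidth P ≤ widthF P l' := by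
  have hne : (Set.range fun l : {l : Fin d → ℤ // l ≠ 0} => widthF P l.1).Nonempty := by
    refine ⟨widthF P (Pi.single ⟨0, hd⟩ 1), ⟨⟨Pi.single ⟨0, hd⟩ 1, ?_⟩, rfl⟩⟩
    intro h
    have := congrFun h ⟨0, hd⟩
    simp at this
  have hnat : ∀ x ∈ (Set.range fun l : {l : Fin d → ℤ // l ≠ 0} => widthF P l.1),
      ∃ n : ℕ, x = n := by
    rintro x ⟨⟨l, hl⟩, rfl⟩
    exact hP.widthF_nat l
  obtain ⟨x₀, hx₀mem, hlb, hinf⟩ := least_of_nat_vals hne hnat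
  obtain ⟨⟨l, hl⟩, hleq⟩ := hx₀mem
  refine ⟨l, hl, ?_, ?_⟩
  · rw [latWidth, hinf]
    exact hleq
  · intro l' hl'
    rw [latWidth, hinf]
    exact hlb _ ⟨⟨l', hl'⟩, rfl⟩


lemma exists_perp {d : ℕ} (hd : 2 ≤ d) (l : Fin d → ℤ) :
    ∃ u : Fin d → ℤ, u ≠ 0 ∧ ∑ i, l i * u i = 0 := by
  have h0 : (0 : ℕ) < d := by omega
  have h1 : (1 : ℕ) < d := by omega
  set i0 : Fin d := ⟨0, h0⟩
  set i1 : Fin d := ⟨1, h1⟩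
  have hne : i0 ≠ i1 := by simp [i0, i1, Fin.ext_iff]
  by_cases h : l i0 = 0
  · refine ⟨(Pi.single i0 (1:ℤ) : Fin d → ℤ), ?_, ?_⟩
    · intro hc
      have := congrFun hc i0
      simp [Pi.single_apply] at this
    · rw [Finset.sum_eq_single i0 (fun b _ hb => by simp [Pi.single_apply, hb]) (by simp)]
      simp [h]
  · refine ⟨(Pi.single i1 (l i0) : Fin d → ℤ) - (Pi.single i0 (l i1) : Fin d → ℤ), ?_, ?_⟩
    · intro hc
      have := congrFun hc i1
      simp [Pi.single_apply, hne.symm] at this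
      exact h this
    · have hs : ∀ i, l i * ((Pi.single i1 (l i0) : Fin d → ℤ) - (Pi.single i0 (l i1) : Fin d → ℤ)) i
          = l i * (Pi.single i1 (l i0) : Fin d → ℤ) i - l i * (Pi.single i0 (l i1) : Fin d → ℤ) i := by
        intro i; simp [mul_sub]
      rw [Finset.sum_congr rfl (fun i _ => hs i), Finset.sum_sub_distrib]
      have e1 : ∑ i, l i * (Pi.single i1 (l i0) : Fin d → ℤ) i = l i1 * l i0 := by
        rw [Finset.sum_eq_single i1 (fun b _ hb => by simp [Pi.single_apply, hb]) (by simp)]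
        simp
      have e2 : ∑ i, l i * (Pi.single i0 (l i1) : Fin d → ℤ) i = l i0 * l i1 := by
        rw [Finset.sum_eq_single i0 (fun b _ hb => by simp [Pi.single_apply, hb]) (by simp)]
        simp
      rw [e1, e2]; ring

theorem exists_stack {d : ℕ} (hd : 2 ≤ d) {P : Set (Fin d → ℝ)}
    (hP : IsLatticePolytope P) (hspan : affineSpan ℝ P = ⊤) :
    ∃ (Q : Set (Fin d → ℝ)) (z : Fin d → ℤ),
      IsLatticePolytope Q ∧ affineSpan ℝ Q = ⊤ ∧ P ⊆ Q ∧ ratl z ∉ P ∧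
      {x : Fin d → ℤ | ratl x ∈ Q} = insert z {x : Fin d → ℤ | ratl x ∈ P} ∧
      latWidth Q = latWidth P := by
  obtain ⟨l, hl, hlW, hlmin⟩ := latWidth_attained (by omega) hP
  obtain ⟨a, b, haP, hbP, hmin, hmax⟩ := hP.exists_flin_bounds l
  set m : ℝ := flin l (ratl a) with hm_def
  set M : ℝ := flin l (ratl b) with hM_def
  have hmM : m ≤ M := hmax (ratl a) haP
  set Sl : Set (Fin d → ℝ) := {x | flin l x ≤ M} ∩ {x | m ≤ flin l x} with hSl_def
  have hSlconv : Convex ℝ Sl :=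
    (convex_halfSpace_le ⟨(flin l).map_add, (flin l).map_smul⟩ M).inter
      (convex_halfSpace_ge ⟨(flin l).map_add, (flin l).map_smul⟩ m)
  have hPSl : P ⊆ Sl := fun x hx => ⟨hmax x hx, hmin x hx⟩
  obtain ⟨u₀, hu₀ne, hu₀perp⟩ := exists_perp hd l
  have hlevel : ∀ k : ℤ, flin l (ratl (a + k • u₀)) = m := by
    intro k
    rw [flin_ratl, hm_def, flin_ratl]
    congr 1
    have : ∀ i, l i * (a + k • u₀) i = l i * a i + k * (l i * u₀ i) := by
      intro i; simp [Pi.smul_apply]; ring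
    rw [Finset.sum_congr rfl (fun i _ => this i), Finset.sum_add_distrib, ← Finset.mul_sum,
      hu₀perp]
    ring
  obtain ⟨R, hR0, hRP⟩ := hP.subset_ball
  obtain ⟨j, hj⟩ := Function.ne_iff.1 hu₀ne
  simp only [Pi.zero_apply] at hj
  -- a far-away lattice point in the slab
  set k₀ : ℤ := |⌈R⌉| + |a j| + 1 with hk₀_def
  set y₀ : Fin d → ℤ := a + k₀ • u₀ with hy₀_def
  have hy₀Sl : ratl y₀ ∈ Sl := by
    constructor
    · show flin l (ratl y₀) ≤ M
      rw [hlevel k₀]; exact hmM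
    · show m ≤ flin l (ratl y₀)
      rw [hlevel k₀]
  have hy₀P : ratl y₀ ∉ P := by
    intro hc
    have h1 : ‖ratl y₀‖ ≤ R := by
      have := hRP hc
      simpa [Metric.mem_closedBall, dist_zero_right] using this
    have h2 : |(y₀ j : ℝ)| ≤ ‖ratl y₀‖ := by
      have := norm_le_pi_norm (ratl y₀) j
      simpa [ratl] using this
    have h3 : (|⌈R⌉| : ℤ) + 1 ≤ |y₀ j| := by
      have hyj : y₀ j = a j + k₀ * u₀ j := by simp [hy₀_def]
      have habs : (1:ℤ) ≤ |u₀ j| := Int.one_le_abs (by exact hj)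
      have e1 : |k₀ * u₀ j| ≤ |y₀ j| + |a j| := by
        have e0 : |k₀ * u₀ j| = |y₀ j + -(a j)| := by
          congr 1
          rw [hyj]; ring
        rw [e0]
        calc |y₀ j + -(a j)| ≤ |y₀ j| + |-(a j)| := abs_add_le _ _
          _ = |y₀ j| + |a j| := by rw [abs_neg]
      have h5 : k₀ ≤ |k₀ * u₀ j| := by
        calc k₀ ≤ |k₀| := le_abs_self _
          _ = |k₀| * 1 := (mul_one _).symm
          _ ≤ |k₀| * |u₀ j| := mul_le_mul_of_nonneg_left habs (abs_nonneg _)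
          _ = |k₀ * u₀ j| := (abs_mul _ _).symm
      have hk₀exp : k₀ = |⌈R⌉| + |a j| + 1 := hk₀_def
      linarith
    have h6 : R < ((|⌈R⌉| : ℤ) : ℝ) + 1 := by
      have := Int.le_ceil R
      have h7 : (⌈R⌉ : ℤ) ≤ |⌈R⌉| := le_abs_self _
      have : R ≤ ((|⌈R⌉| : ℤ) : ℝ) := this.trans (by exact_mod_cast h7)
      linarith
    have h8 : ((|⌈R⌉| : ℤ) : ℝ) + 1 ≤ |(y₀ j : ℝ)| := by
      rw [← Int.cast_abs]
      have : ((|⌈R⌉| + 1 : ℤ) : ℝ) ≤ ((|y₀ j| : ℤ) : ℝ) := by exact_mod_cast h3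
      push_cast at this ⊢
      linarith
    linarith
  -- interior point
  have hint : (interior P).Nonempty :=
    (hP.convex.interior_nonempty_iff_affineSpan_eq_top).mpr hspan
  obtain ⟨u, hu⟩ := hint
  set s : Set (Fin d → ℝ) := (fun x => -u + x) '' P with hs_def
  have hs_mem : ∀ x, x ∈ s ↔ u + x ∈ P := by
    intro x
    constructor
    · rintro ⟨p, hp, rfl⟩
      simpa using hp
    · intro hx
      exact ⟨u + x, hx, by module⟩
  have hs_conv : Convex ℝ s := hP.convex.translate (-u)
  have hs_closed : IsClosed s :=
    (hP.isCompact.image (continuous_const.add continuous_id)).isClosed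
  have hs_nhds : s ∈ 𝓝 (0 : Fin d → ℝ) := by
    rw [← mem_interior_iff_mem_nhds]
    have : s = ⇑(Homeomorph.addLeft (-u)) '' P := by
      rw [hs_def]; rfl
    rw [this, ← Homeomorph.image_interior]
    exact ⟨u, hu, by simp⟩
  have habs : Absorbent ℝ s := absorbent_nhds_zero hs_nhds
  set g : (Fin d → ℝ) → ℝ := fun x => gauge s (-u + x) with hg_def
  have hg_iff : ∀ x, g x ≤ 1 ↔ x ∈ P := by
    intro x
    rw [hg_def]
    simp only
    rw [gauge_le_one_iff_mem_closure hs_conv hs_nhds, hs_closed.closure_eq, hs_mem]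
    constructor
    · intro hx; convert hx using 2; abel
    · intro hx; convert hx using 2; abel
  have hg_combo : ∀ (t1 t2 : ℝ) (x y : Fin d → ℝ), 0 ≤ t1 → 0 ≤ t2 → t1 + t2 = 1 →
      g (t1 • x + t2 • y) ≤ t1 * g x + t2 * g y := by
    intro t1 t2 x y ht1 ht2 h12
    have key : -u + (t1 • x + t2 • y) = t1 • (-u + x) + t2 • (-u + y) := by
      have : (-u : Fin d → ℝ) = (t1 + t2) • (-u) := by rw [h12, one_smul]
      rw [smul_add, smul_add]
      rw [show (-u : Fin d → ℝ) + (t1 • x + t2 • y)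
          = (t1 + t2) • (-u) + (t1 • x + t2 • y) by rw [← this]]
      rw [add_smul]
      abel
    rw [hg_def]
    simp only
    rw [key]
    calc gauge s (t1 • (-u + x) + t2 • (-u + y))
        ≤ gauge s (t1 • (-u + x)) + gauge s (t2 • (-u + y)) := gauge_add_le hs_conv habs _ _
      _ = t1 * gauge s (-u + x) + t2 * gauge s (-u + y) := by
          rw [gauge_smul_of_nonneg ht1, gauge_smul_of_nonneg ht2, smul_eq_mul, smul_eq_mul]
  set C : ℝ := R + ‖u‖ + 1 with hC_def
  have hC0 : 0 < C := by positivity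
  have hg_lb : ∀ x, ‖-u + x‖ / C ≤ g x := by
    intro x
    apply le_gauge_of_subset_closedBall habs hC0.le
    rintro w ⟨p, hp, rfl⟩
    have h1 : ‖p‖ ≤ R := by
      have := hRP hp
      simpa [Metric.mem_closedBall, dist_zero_right] using this
    have : ‖-u + p‖ ≤ ‖u‖ + ‖p‖ := by
      calc ‖-u + p‖ ≤ ‖-u‖ + ‖p‖ := norm_add_le _ _
        _ = ‖u‖ + ‖p‖ := by rw [norm_neg]
    simp only [Metric.mem_closedBall, dist_zero_right]
    linarith
  -- the minimizing lattice point
  set Zg : Set (Fin d → ℤ) := {y | ratl y ∈ Sl ∧ ratl y ∉ P} with hZg_def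
  have hy₀Zg : y₀ ∈ Zg := ⟨hy₀Sl, hy₀P⟩
  set B : ℝ := C * g (ratl y₀) + ‖u‖ with hB_def
  have hT_sub : {y ∈ Zg | g (ratl y) ≤ g (ratl y₀)} ⊆
      {x : Fin d → ℤ | ratl x ∈ Metric.closedBall (0 : Fin d → ℝ) B} := by
    rintro y ⟨-, hy⟩
    have h1 : ‖-u + ratl y‖ / C ≤ g (ratl y) := hg_lb _
    have h2 : ‖-u + ratl y‖ ≤ C * g (ratl y₀) := by
      rw [div_le_iff₀ hC0] at h1
      calc ‖-u + ratl y‖ ≤ g (ratl y) * C := h1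
        _ ≤ g (ratl y₀) * C := by
            apply mul_le_mul_of_nonneg_right hy hC0.le
        _ = C * g (ratl y₀) := by ring
    have h3 : ‖ratl y‖ ≤ ‖u‖ + ‖-u + ratl y‖ := by
      calc ‖ratl y‖ = ‖u + (-u + ratl y)‖ := by congr 1; abel
        _ ≤ ‖u‖ + ‖-u + ratl y‖ := norm_add_le _ _
    simp only [mem_setOf_eq, Metric.mem_closedBall, dist_zero_right]
    linarith
  have hTfin : {y ∈ Zg | g (ratl y) ≤ g (ratl y₀)}.Finite :=
    (latt_finite_ball B).subset hT_sub
  have hTne : y₀ ∈ {y ∈ Zg | g (ratl y) ≤ g (ratl y₀)} := ⟨hy₀Zg, le_refl _⟩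
  obtain ⟨z, hzT, hzmin'⟩ := hTfin.toFinset.exists_min_image (fun y => g (ratl y))
    ⟨y₀, hTfin.mem_toFinset.2 hTne⟩
  rw [hTfin.mem_toFinset] at hzT
  have hzmin : ∀ y ∈ Zg, g (ratl z) ≤ g (ratl y) := by
    intro y hy
    by_cases hc : g (ratl y) ≤ g (ratl y₀)
    · exact hzmin' y (hTfin.mem_toFinset.2 ⟨hy, hc⟩)
    · exact le_trans (hzT.2.trans (le_of_not_ge hc)) (le_refl _)
  have hzZg : z ∈ Zg := hzT.1
  -- the new polytope
  set L : Finset (Fin d → ℤ) := hP.latt_finite.toFinset with hL_def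
  have hLcoe : (↑L : Set (Fin d → ℤ)) = {x | ratl x ∈ P} := hP.latt_finite.coe_toFinset
  have haL : a ∈ L := by rw [← Finset.mem_coe, hLcoe]; exact haP
  set Q : Set (Fin d → ℝ) := convexHull ℝ (ratl '' ↑(insert z L)) with hQ_def
  have hQlat : IsLatticePolytope Q := ⟨insert z L, ⟨z, Finset.mem_insert_self _ _⟩, rfl⟩
  have haL' : a ∈ (↑L : Set (Fin d → ℤ)) := by rw [hLcoe]; exact haP
  have hLne : (ratl '' (↑L : Set (Fin d → ℤ))).Nonempty := ⟨ratl a, a, haL', rfl⟩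
  have hPQ : P ⊆ Q := by
    conv_lhs => rw [hP.eq_hull_latt]
    rw [hQ_def]
    apply convexHull_mono
    apply Set.image_mono
    intro x hx
    have hxL : x ∈ (↑L : Set (Fin d → ℤ)) := by rw [hLcoe]; exact hx
    rw [Finset.coe_insert]
    exact Set.mem_insert_of_mem _ hxL
  have hQjoin : Q = convexJoin ℝ {ratl z} P := by
    rw [hQ_def, Finset.coe_insert, Set.image_insert_eq, convexHull_insert hLne]
    congr 1
    rw [hLcoe, ← hP.eq_hull_latt]
  have hzQ : ratl z ∈ Q :=
    subset_convexHull ℝ _ ⟨z, by simp [Finset.coe_insert], rfl⟩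
  have hQspan : affineSpan ℝ Q = ⊤ :=
    le_antisymm le_top (hspan ▸ affineSpan_mono ℝ hPQ)
  have hQSl : Q ⊆ Sl := by
    rw [hQ_def]
    apply convexHull_min _ hSlconv
    rintro x ⟨y, hy, rfl⟩
    simp only [Finset.coe_insert, Set.mem_insert_iff, Finset.mem_coe] at hy
    rcases hy with rfl | hy
    · exact hzZg.1
    · apply hPSl
      have hyL : y ∈ (↑L : Set (Fin d → ℤ)) := hy
      rw [hLcoe] at hyL
      exact hyL
  have hlatQ : {x : Fin d → ℤ | ratl x ∈ Q} = insert z {x : Fin d → ℤ | ratl x ∈ P} := by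
    ext y
    simp only [mem_setOf_eq, Set.mem_insert_iff]
    constructor
    · intro hy
      by_cases hyP : ratl y ∈ P
      · exact Or.inr hyP
      left
      have hy' := hy
      rw [hQjoin, mem_convexJoin] at hy'
      obtain ⟨az, haz, p, hp, hseg⟩ := hy'
      rw [Set.mem_singleton_iff] at haz
      subst haz
      obtain ⟨t1, t2, ht1, ht2, h12, heq⟩ := hseg
      have hyZg : y ∈ Zg := ⟨hQSl hy, hyP⟩
      have h1 : 1 < g (ratl y) := by
        by_contra hc
        exact hyP ((hg_iff _).1 (le_of_not_gt hc))
      have h2 : g (ratl z) ≤ g (ratl y) := hzmin y hyZg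
      have h3 : g (ratl y) ≤ t1 * g (ratl z) + t2 * g p := by
        rw [← heq]
        exact hg_combo t1 t2 _ _ ht1 ht2 h12
      have h4 : g p ≤ 1 := (hg_iff p).2 hp
      have hgz0 : 0 ≤ g (ratl z) := gauge_nonneg _
      have hgp0 : 0 ≤ g p := gauge_nonneg _
      have ht2eq : t2 = 0 := by
        by_contra hc
        have ht2pos : 0 < t2 := lt_of_le_of_ne ht2 (Ne.symm hc)
        have hgz1 : g (ratl z) ≤ 1 := by nlinarith
        nlinarith
      have ht1eq : t1 = 1 := by linarith
      have : ratl y = ratl z := by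
        rw [← heq, ht1eq, ht2eq, one_smul, zero_smul, add_zero]
      exact ratl_inj this
    · rintro (rfl | hy)
      · exact hzQ
      · exact hPQ hy
  -- width is preserved
  have hbdd : ∀ (T : Set (Fin d → ℝ)), IsLatticePolytope T →
      BddBelow (Set.range fun l' : {l' : Fin d → ℤ // l' ≠ 0} => widthF T l'.1) := by
    intro T hT
    refine ⟨0, ?_⟩
    rintro x ⟨⟨l', -⟩, rfl⟩
    obtain ⟨nn, hnn⟩ := hT.widthF_nat l'
    simp only
    rw [hnn]
    positivity
  have hQw : widthF Q l = widthF P l := by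
    have h1 : widthF Q l = M - m :=
      widthF_eq (fun x hx => (hQSl hx).2) (fun x hx => (hQSl hx).1)
        ⟨ratl b, hPQ hbP, rfl⟩ ⟨ratl a, hPQ haP, rfl⟩
    have h2 : widthF P l = M - m :=
      widthF_eq hmin hmax ⟨ratl b, hbP, rfl⟩ ⟨ratl a, haP, rfl⟩
    rw [h1, h2]
  have hwidth : latWidth Q = latWidth P := by
    apply le_antisymm
    · rw [← hlW, ← hQw]
      exact csInf_le (hbdd Q hQlat) ⟨⟨l, hl⟩, rfl⟩
    · apply le_csInf
      · exact ⟨widthF Q l, ⟨⟨l, hl⟩, rfl⟩⟩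
      · rintro x ⟨⟨l', hl'⟩, rfl⟩
        obtain ⟨a', b', ha', hb', hmin', hmax'⟩ := hQlat.exists_flin_bounds l'
        calc latWidth P ≤ widthF P l' := hlmin l' hl'
          _ ≤ widthF Q l' := widthF_mono hPQ ⟨ratl a, haP⟩ hmin' hmax'
  exact ⟨Q, z, hQlat, hQspan, hPQ, hzZg.2, hlatQ, hwidth⟩


lemma ratl_add {d : ℕ} (x y : Fin d → ℤ) : ratl (x + y) = ratl x + ratl y := by
  funext i; simp [ratl]

lemma ratl_mulVec {d : ℕ} (A : Matrix (Fin d) (Fin d) ℤ) (v : Fin d → ℤ) :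
    ratl (A.mulVec v) = (A.map (Int.cast : ℤ → ℝ)).mulVec (ratl v) := by
  funext i
  simp only [ratl, Matrix.mulVec, dotProduct, Matrix.map_apply]
  push_cast
  rfl

lemma affMap_ratl {d : ℕ} (A : Matrix (Fin d) (Fin d) ℤ) (b x : Fin d → ℤ) :
    affMap A b (ratl x) = ratl (A.mulVec x + b) := by
  rw [affMap, ratl_add, ratl_mulVec]

lemma affMap_comp {d : ℕ} (A₂ A₁ : Matrix (Fin d) (Fin d) ℤ) (b₂ b₁ : Fin d → ℤ)
    (x : Fin d → ℝ) :
    affMap A₂ b₂ (affMap A₁ b₁ x) = affMap (A₂ * A₁) (A₂.mulVec b₁ + b₂) x := by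
  simp only [affMap]
  have hmul : (A₂ * A₁).map (Int.cast : ℤ → ℝ) = A₂.map Int.cast * A₁.map Int.cast := by
    have := Matrix.map_mul (L := A₂) (M := A₁) (f := Int.castRingHom ℝ)
    simpa using this
  rw [Matrix.mulVec_add, ratl_add, ratl_mulVec, hmul, ← Matrix.mulVec_mulVec]
  abel

lemma affMap_id {d : ℕ} (x : Fin d → ℝ) : affMap 1 0 x = x := by
  simp only [affMap]
  have h1 : (1 : Matrix (Fin d) (Fin d) ℤ).map (Int.cast : ℤ → ℝ) = 1 := by
    ext i j
    simp [Matrix.map_apply, Matrix.one_apply, apply_ite]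
  rw [h1, Matrix.one_mulVec]
  have : ratl (0 : Fin d → ℤ) = 0 := by funext i; simp [ratl]
  rw [this, add_zero]

lemma unimod_refl {d : ℕ} (P : Set (Fin d → ℝ)) : UnimodEquiv P P := by
  refine ⟨1, 0, by simp, ?_⟩
  have : affMap (1 : Matrix (Fin d) (Fin d) ℤ) 0 = id := by
    funext x; exact affMap_id x
  rw [this, Set.image_id]

lemma unimod_symm {d : ℕ} {P P' : Set (Fin d → ℝ)} (h : UnimodEquiv P P') :
    UnimodEquiv P' P := by
  obtain ⟨A, b, hA, him⟩ := h
  letI := A.invertibleOfIsUnitDet hA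
  refine ⟨⅟A, -((⅟A).mulVec b), Matrix.isUnit_det_of_invertible _, ?_⟩
  rw [← him, ← Set.image_comp]
  have : (affMap (⅟A) (-((⅟A).mulVec b)) ∘ affMap A b) = id := by
    funext x
    simp only [Function.comp_apply, id_eq]
    rw [affMap_comp, invOf_mul_self]
    rw [show (⅟A).mulVec b + -((⅟A).mulVec b) = 0 by abel]
    exact affMap_id x
  rw [this, Set.image_id]

lemma unimod_trans {d : ℕ} {P P' P'' : Set (Fin d → ℝ)} (h : UnimodEquiv P P')
    (h' : UnimodEquiv P' P'') : UnimodEquiv P P'' := by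
  obtain ⟨A, b, hA, him⟩ := h
  obtain ⟨A', b', hA', him'⟩ := h'
  refine ⟨A' * A, A'.mulVec b + b', by rw [Matrix.det_mul]; exact hA'.mul hA, ?_⟩
  rw [← him', ← him, ← Set.image_comp]
  apply Set.image_congr
  intro x _
  rw [Function.comp_apply, affMap_comp]

def affMapA {d : ℕ} (A : Matrix (Fin d) (Fin d) ℤ) (b : Fin d → ℤ) :
    (Fin d → ℝ) →ᵃ[ℝ] (Fin d → ℝ) where
  toFun := affMap A b
  linear := Matrix.mulVecLin (A.map (Int.cast : ℤ → ℝ))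
  map_vadd' := by
    intro p v
    simp only [affMap, Matrix.mulVecLin_apply]
    rw [show v +ᵥ p = v + p from rfl, Matrix.mulVec_add]
    rw [show ((A.map (Int.cast : ℤ → ℝ)).mulVec v) +ᵥ
      ((A.map (Int.cast : ℤ → ℝ)).mulVec p + ratl b) = (A.map (Int.cast : ℤ → ℝ)).mulVec v +
      ((A.map (Int.cast : ℤ → ℝ)).mulVec p + ratl b) from rfl]
    abel

lemma affMap_convexHull {d : ℕ} (A : Matrix (Fin d) (Fin d) ℤ) (b : Fin d → ℤ)
    (s : Set (Fin d → ℝ)) :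
    affMap A b '' (convexHull ℝ s) = convexHull ℝ (affMap A b '' s) := by
  exact AffineMap.image_convexHull (affMapA A b) s


lemma unimod_hull_image {d : ℕ} {P : Set (Fin d → ℝ)} (hP : IsLatticePolytope P)
    {A : Matrix (Fin d) (Fin d) ℤ} {b : Fin d → ℤ} (hA : IsUnit A.det) :
    UnimodEquiv P (convexHull ℝ (ratl '' ((fun y => A.mulVec y + b) '' {x | ratl x ∈ P}))) := by
  refine ⟨A, b, hA, ?_⟩
  conv_lhs => rw [hP.eq_hull_latt]
  rw [affMap_convexHull]
  congr 1
  rw [Set.image_image, Set.image_image]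
  apply Set.image_congr
  intro x _
  exact affMap_ratl A b x

lemma fiber_finite {d : ℕ} {S : Set (Set (Fin d → ℝ))}
    (hSpoly : ∀ P ∈ S, IsLatticePolytope P)
    (hSnoneq : ∀ P ∈ S, ∀ P' ∈ S, P ≠ P' → ¬ UnimodEquiv P P')
    (Qf : Set (Fin d → ℝ) → Set (Fin d → ℝ))
    (hQsub : ∀ P ∈ S, P ⊆ Qf P)
    (Q₀ : Set (Fin d → ℝ)) (hQ₀ : IsLatticePolytope Q₀) :
    {P ∈ S | UnimodEquiv (Qf P) Q₀}.Finite := by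
  classical
  have hL₀fin : {x : Fin d → ℤ | ratl x ∈ Q₀}.Finite := hQ₀.latt_finite
  have hex : ∀ P : Set (Fin d → ℝ), ∃ A : Matrix (Fin d) (Fin d) ℤ, ∃ b : Fin d → ℤ,
      UnimodEquiv (Qf P) Q₀ → IsUnit A.det ∧ affMap A b '' Qf P = Q₀ := by
    intro P
    by_cases h : UnimodEquiv (Qf P) Q₀
    · obtain ⟨A, b, h1, h2⟩ := h
      exact ⟨A, b, fun _ => ⟨h1, h2⟩⟩
    · exact ⟨1, 0, fun hc => absurd hc h⟩
  choose Amat bvec hAb using hex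
  set τ : Set (Fin d → ℝ) → Set (Fin d → ℤ) := fun P =>
    (fun y => (Amat P).mulVec y + bvec P) '' {x | ratl x ∈ P} with hτ
  have hτsub : ∀ P ∈ {P ∈ S | UnimodEquiv (Qf P) Q₀}, τ P ⊆ {x : Fin d → ℤ | ratl x ∈ Q₀} := by
    rintro P ⟨hPS, hPeq⟩
    rintro y' ⟨y, hy, rfl⟩
    have hspec := hAb P hPeq
    have hmem : affMap (Amat P) (bvec P) (ratl y) ∈ affMap (Amat P) (bvec P) '' Qf P :=
      ⟨ratl y, hQsub P hPS hy, rfl⟩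
    rw [hspec.2, affMap_ratl] at hmem
    exact hmem
  have hτequiv : ∀ P ∈ {P ∈ S | UnimodEquiv (Qf P) Q₀},
      UnimodEquiv P (convexHull ℝ (ratl '' τ P)) := by
    rintro P ⟨hPS, hPeq⟩
    exact unimod_hull_image (hSpoly P hPS) (hAb P hPeq).1
  apply Set.Finite.of_finite_image (f := τ)
  · apply Set.Finite.subset (Set.Finite.finite_subsets hL₀fin)
    rintro T ⟨P, hP, rfl⟩
    exact hτsub P hP
  · intro P₁ h₁ P₂ h₂ hT
    by_contra hne
    have he1 := hτequiv P₁ h₁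
    have he2 := hτequiv P₂ h₂
    rw [hT] at he1
    exact hSnoneq P₁ h₁.1 P₂ h₂.1 hne (unimod_trans he1 (unimod_symm he2))

lemma exists_seq {α : Type*} {S : Set α} (hS : S.Infinite) (r : α → α → Prop)
    (hfib : ∀ a ∈ S, {a' ∈ S | r a' a}.Finite) :
    ∃ f : ℕ → α, (∀ k, f k ∈ S) ∧ (∀ j k : ℕ, j < k → ¬ r (f k) (f j)) := by
  classical
  set Bad : Finset α → Set α := fun F => ⋃ a ∈ F, {a' ∈ S | a ∈ S ∧ r a' a} with hBad
  have hBadfin : ∀ F : Finset α, (Bad F).Finite := by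
    intro F
    apply Set.Finite.biUnion F.finite_toSet
    intro a _
    by_cases ha : a ∈ S
    · exact ((hfib a ha).subset (fun x hx => ⟨hx.1, hx.2.2⟩))
    · convert Set.finite_empty
      ext x
      simp only [Set.mem_setOf_eq, Set.mem_empty_iff_false, iff_false]
      rintro ⟨-, haS, -⟩
      exact ha haS
  have hpick : ∀ F : Finset α, (S \ Bad F).Nonempty := fun F =>
    (hS.diff (hBadfin F)).nonempty
  set pick : Finset α → α := fun F => (hpick F).some with hpick_def
  set Fs : ℕ → Finset α := fun k => Nat.rec ∅ (fun _ F => insert (pick F) F) k with hFs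
  set f : ℕ → α := fun k => pick (Fs k) with hf
  have hstep : ∀ k, Fs (k + 1) = insert (f k) (Fs k) := fun k => rfl
  have hfk : ∀ k, f k ∈ S \ Bad (Fs k) := fun k => (hpick (Fs k)).some_mem
  have hmem : ∀ j k, j < k → f j ∈ Fs k := by
    intro j k
    induction k with
    | zero => omega
    | succ k ih =>
      intro hjk
      rw [hstep k]
      rcases Nat.lt_succ_iff_lt_or_eq.1 hjk with h | h
      · exact Finset.mem_insert_of_mem (ih h)
      · subst h
        exact Finset.mem_insert_self _ _
  refine ⟨f, fun k => (hfk k).1, ?_⟩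
  intro j k hjk hr
  apply (hfk k).2
  rw [hBad]
  apply Set.mem_biUnion (hmem j k hjk)
  exact ⟨(hfk k).1, (hfk j).1, hr⟩


lemma d1_flin (x : Fin 1 → ℝ) : flin (fun _ => (1:ℤ)) x = x 0 := by
  simp [flin]

lemma d1_seg {a b : Fin 1 → ℤ} (x : Fin 1 → ℝ)
    (h1 : (a 0 : ℝ) ≤ x 0) (h2 : x 0 ≤ (b 0 : ℝ)) :
    x ∈ segment ℝ (ratl a) (ratl b) := by
  have hone : ∀ (y : Fin 1 → ℝ) (i : Fin 1), y i = y 0 := fun y i => by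
    rw [Subsingleton.elim i 0]
  by_cases hab : (a 0 : ℝ) = (b 0 : ℝ)
  · have hx : x = ratl a := by
      funext i
      rw [hone x i]
      have : x 0 = (a 0 : ℝ) := le_antisymm (hab ▸ h2) h1
      rw [this, hone (ratl a) i]; rfl
    rw [hx]
    exact left_mem_segment ℝ _ _
  · have hlt : (a 0 : ℝ) < (b 0 : ℝ) := lt_of_le_of_ne (h1.trans h2) hab
    have hpos : (0:ℝ) < (b 0 : ℝ) - (a 0 : ℝ) := by linarith
    set t : ℝ := (x 0 - (a 0 : ℝ)) / ((b 0 : ℝ) - (a 0 : ℝ)) with ht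
    refine ⟨1 - t, t, ?_, ?_, by ring, ?_⟩
    · have : t ≤ 1 := by
        rw [ht, div_le_one hpos]; linarith
      linarith
    · rw [ht]; exact div_nonneg (by linarith) hpos.le
    · funext i
      simp only [Pi.add_apply, Pi.smul_apply, smul_eq_mul]
      rw [hone x i, hone (ratl a) i, hone (ratl b) i]
      show (1 - t) * (a 0 : ℝ) + t * (b 0 : ℝ) = x 0
      rw [ht]
      field_simp
      ring

lemma d1_struct {P : Set (Fin 1 → ℝ)} (hP : IsLatticePolytope P) :
    ∃ a b : Fin 1 → ℤ, a 0 ≤ b 0 ∧ P = convexHull ℝ {ratl a, ratl b} ∧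
      latticeSize P = (b 0 + 1 - a 0).toNat := by
  obtain ⟨a, b, haP, hbP, hmin, hmax⟩ := hP.exists_flin_bounds (fun _ => (1:ℤ))
  have hab : (a 0 : ℝ) ≤ (b 0 : ℝ) := by
    have := hmax (ratl a) haP
    rw [d1_flin, d1_flin] at this
    exact this
  have habz : a 0 ≤ b 0 := by exact_mod_cast hab
  have hPeq : P = convexHull ℝ {ratl a, ratl b} := by
    apply le_antisymm
    · intro x hx
      rw [convexHull_pair]
      apply d1_seg
      · have := hmin x hx
        rw [d1_flin, d1_flin] at this
        exact this
      · have := hmax x hx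
        rw [d1_flin, d1_flin] at this
        exact this
    · apply convexHull_min _ hP.convex
      rintro y (rfl | rfl)
      · exact haP
      · exact hbP
  refine ⟨a, b, habz, hPeq, ?_⟩
  have hlatt : {x : Fin 1 → ℤ | ratl x ∈ P} =
      (fun k : ℤ => (fun _ : Fin 1 => k)) '' Set.Icc (a 0) (b 0) := by
    ext y
    simp only [mem_setOf_eq, Set.mem_image, Set.mem_Icc]
    constructor
    · intro hy
      refine ⟨y 0, ⟨?_, ?_⟩, ?_⟩
      · have := hmin (ratl y) hy
        rw [d1_flin, d1_flin] at this
        simp only [ratl] at this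
        exact_mod_cast this
      · have := hmax (ratl y) hy
        rw [d1_flin, d1_flin] at this
        simp only [ratl] at this
        exact_mod_cast this
      · funext i
        rw [Subsingleton.elim i 0]
    · rintro ⟨k, ⟨hk1, hk2⟩, rfl⟩
      rw [hPeq, convexHull_pair]
      refine d1_seg _ ?_ ?_
      · show (a 0 : ℝ) ≤ ((k : ℝ))
        exact_mod_cast hk1
      · show ((k : ℝ)) ≤ (b 0 : ℝ)
        exact_mod_cast hk2
  rw [latticeSize, hlatt]
  rw [Set.ncard_image_of_injective _ (fun k k' hkk => congrFun hkk 0)]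
  rw [show (Set.Icc (a 0) (b 0)) = ↑(Finset.Icc (a 0) (b 0)) by simp]
  rw [Set.ncard_coe_finset, Int.card_Icc]

lemma d1_equiv {P P' : Set (Fin 1 → ℝ)} (hP : IsLatticePolytope P)
    (hP' : IsLatticePolytope P') (hsize : latticeSize P = latticeSize P') :
    UnimodEquiv P P' := by
  obtain ⟨a, b, hab, hPeq, hsz⟩ := d1_struct hP
  obtain ⟨a', b', hab', hPeq', hsz'⟩ := d1_struct hP'
  have hdiff : b 0 - a 0 = b' 0 - a' 0 := by
    rw [hsz, hsz'] at hsize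
    omega
  have h1 : affMap 1 (a' - a) (ratl a) = ratl a' := by
    rw [affMap_ratl, Matrix.one_mulVec]
    apply congrArg ratl
    funext i
    rw [Subsingleton.elim i 0]
    show a 0 + (a' 0 - a 0) = a' 0
    omega
  have h2 : affMap 1 (a' - a) (ratl b) = ratl b' := by
    rw [affMap_ratl, Matrix.one_mulVec]
    apply congrArg ratl
    funext i
    rw [Subsingleton.elim i 0]
    show b 0 + (a' 0 - a 0) = b' 0
    omega
  refine ⟨1, a' - a, by simp, ?_⟩
  rw [hPeq, affMap_convexHull, hPeq']
  congr 1
  rw [Set.image_pair, h1, h2]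


/-- Monotonicity of the finiteness threshold width in the size: an infinite family of
pairwise non-equivalent lattice d-polytopes of size n and width W yields one of size
n+1 and width W. -/
theorem threshold_monotone_in_size (d n : ℕ) (W : ℝ)
    (h : ∃ S : Set (Set (Fin d → ℝ)), S.Infinite ∧
      (∀ P ∈ S, IsLatticePolytope P ∧ affineSpan ℝ P = ⊤ ∧
        latticeSize P = n ∧ latWidth P = W) ∧
      (∀ P ∈ S, ∀ P' ∈ S, P ≠ P' → ¬ UnimodEquiv P P')) :
    ∃ S : Set (Set (Fin d → ℝ)), S.Infinite ∧
      (∀ P ∈ S, IsLatticePolytope P ∧ affineSpan ℝ P = ⊤ ∧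
        latticeSize P = n + 1 ∧ latWidth P = W) ∧
      (∀ P ∈ S, ∀ P' ∈ S, P ≠ P' → ¬ UnimodEquiv P P') := by
  match d with
  | 0 =>
    exfalso
    obtain ⟨S, hSinf, -, -⟩ := h
    have hsub : Subsingleton (Fin 0 → ℝ) := ⟨fun a b => funext fun i => i.elim0⟩
    have : Finite (Fin 0 → ℝ) := Finite.of_subsingleton
    exact hSinf (Set.toFinite S)
  | 1 =>
    exfalso
    obtain ⟨S, hSinf, hSprop, hSnoneq⟩ := h
    obtain ⟨P, hP, P', hP', hne⟩ := hSinf.nontrivial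
    have h1 := hSprop P hP
    have h2 := hSprop P' hP'
    exact hSnoneq P hP P' hP' hne
      (d1_equiv h1.1 h2.1 (by rw [h1.2.2.1, h2.2.2.1]))
  | (d0 + 2) =>
    set d := d0 + 2 with hd_def
    have hd : 2 ≤ d := by omega
    obtain ⟨S, hSinf, hSprop, hSnoneq⟩ := h
    classical
    -- choose the stacked polytope for each P
    have hex : ∀ P : Set (Fin d → ℝ), ∃ Q : Set (Fin d → ℝ),
        (IsLatticePolytope P ∧ affineSpan ℝ P = ⊤) →
        (IsLatticePolytope Q ∧ affineSpan ℝ Q = ⊤ ∧ P ⊆ Q ∧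
          (∃ z : Fin d → ℤ, ratl z ∉ P ∧
            {x : Fin d → ℤ | ratl x ∈ Q} = insert z {x : Fin d → ℤ | ratl x ∈ P}) ∧
          latWidth Q = latWidth P) := by
      intro P
      by_cases hp : IsLatticePolytope P ∧ affineSpan ℝ P = ⊤
      · obtain ⟨Q, z, h1, h2, h3, h4, h5, h6⟩ := exists_stack hd hp.1 hp.2
        exact ⟨Q, fun _ => ⟨h1, h2, h3, ⟨z, h4, h5⟩, h6⟩⟩
      · exact ⟨∅, fun hc => absurd hc hp⟩
    choose Qf hQf using hex
    have hgood : ∀ P ∈ S, IsLatticePolytope P ∧ affineSpan ℝ P = ⊤ := by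
      intro P hP
      exact ⟨(hSprop P hP).1, (hSprop P hP).2.1⟩
    -- properties of the stacked polytopes
    have hQprop : ∀ P ∈ S, IsLatticePolytope (Qf P) ∧ affineSpan ℝ (Qf P) = ⊤ ∧
        latticeSize (Qf P) = n + 1 ∧ latWidth (Qf P) = W := by
      intro P hP
      obtain ⟨h1, h2, h3, ⟨z, hz1, hz2⟩, h5⟩ := hQf P (hgood P hP)
      refine ⟨h1, h2, ?_, ?_⟩
      · have hznot : z ∉ {x : Fin d → ℤ | ratl x ∈ P} := fun hc => hz1 hc
        rw [latticeSize, hz2,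
          Set.ncard_insert_of_notMem hznot ((hSprop P hP).1.latt_finite)]
        rw [show {x : Fin d → ℤ | ratl x ∈ P}.ncard = latticeSize P from rfl,
          (hSprop P hP).2.2.1]
      · rw [h5, (hSprop P hP).2.2.2]
    have hQsub : ∀ P ∈ S, P ⊆ Qf P := fun P hP => (hQf P (hgood P hP)).2.2.1
    -- finiteness of equivalence fibers
    have hfib : ∀ a ∈ S, {P ∈ S | UnimodEquiv (Qf P) (Qf a)}.Finite := by
      intro a ha
      exact fiber_finite (fun P hP => (hSprop P hP).1) hSnoneq Qf hQsub (Qf a)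
        (hQprop a ha).1
    obtain ⟨f, hfS, hfne⟩ := exists_seq hSinf
      (fun P P' => UnimodEquiv (Qf P) (Qf P')) hfib
    have hinj : Function.Injective (fun k => Qf (f k)) := by
      intro j k hjk
      simp only at hjk
      rcases lt_trichotomy j k with h | h | h
      · exfalso
        apply hfne j k h
        rw [hjk]
        exact unimod_refl _
      · exact h
      · exfalso
        apply hfne k j h
        rw [hjk]
        exact unimod_refl _
    refine ⟨Set.range (fun k => Qf (f k)), Set.infinite_range_of_injective hinj, ?_, ?_⟩
    · rintro Q ⟨k, rfl⟩
      exact hQprop (f k) (hfS k)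
    · rintro Q ⟨k, rfl⟩ Q' ⟨k', rfl⟩ hne heq
      rcases lt_trichotomy k k' with h | h | h
      · exact hfne k k' h (unimod_symm heq)
      · exact hne (by rw [h])
      · exact hfne k' k h heq
end
end

section
/- A lattice simplex has only finitely many equivalence classes of lifts of any bounded size: for every lattice simplex Q \subset \mathbb{R}^{d-1} and every n \in \mathbb{N}, there are only finitely many equivalence classes of lattice polytopes P \subset \mathbb{R}^d with at most n lattice points such that the projection forgetting the last coordinate maps P onto Q. -/
open Set MeasureTheory

noncomputable section

/- ## Auxiliary machinery for the proof -/

namespace SimplexLift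

variable {d : ℕ}

/-- A shear transformation on real points: adds an integer linear functional of the first
`d` coordinates, plus a constant, to the last coordinate. -/
def shearR (l : Fin d → ℤ) (c : ℤ) (x : Fin (d+1) → ℝ) : Fin (d+1) → ℝ :=
  fun j => if j = Fin.last d then x j + (∑ i, (l i : ℝ) * x i.castSucc) + (c : ℝ) else x j

/-- The same shear on integer points. -/
def shearZ (l : Fin d → ℤ) (c : ℤ) (x : Fin (d+1) → ℤ) : Fin (d+1) → ℤ :=
  fun j => if j = Fin.last d then x j + (∑ i, l i * x i.castSucc) + c else x j

/-- The matrix of the shear. -/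
def shearA (l : Fin d → ℤ) : Matrix (Fin (d+1)) (Fin (d+1)) ℤ :=
  fun j k => if j = Fin.last d then (Fin.snoc l (1 : ℤ) : Fin (d+1) → ℤ) k else if k = j then 1 else 0

/-- The translation vector of the shear. -/
def shearb (c : ℤ) : Fin (d+1) → ℤ := fun j => if j = Fin.last d then c else 0

lemma ratl_apply {N : ℕ} (x : Fin N → ℤ) (j : Fin N) : ratl x j = (x j : ℝ) := rfl

lemma castSucc_ne_last (i : Fin d) : (Fin.castSucc i : Fin (d+1)) ≠ Fin.last d :=
  ne_of_lt (Fin.castSucc_lt_last i)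

lemma affMap_shear (l : Fin d → ℤ) (c : ℤ) (x : Fin (d+1) → ℝ) :
    affMap (shearA l) (shearb c) x = shearR l c x := by
  funext j
  simp only [affMap, Pi.add_apply, Matrix.mulVec, dotProduct, Matrix.map_apply,
    shearA, shearb, shearR, ratl]
  by_cases hj : j = Fin.last d
  · subst hj
    simp only [if_pos rfl]
    rw [Fin.sum_univ_castSucc]
    simp only [Fin.snoc_castSucc, Fin.snoc_last]
    push_cast
    ring
  · simp only [if_neg hj]
    rw [Finset.sum_eq_single j]
    · simp
    · intro k _ hk
      simp [if_neg hk]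
    · simp

lemma shearR_castSucc (l : Fin d → ℤ) (c : ℤ) (x : Fin (d+1) → ℝ) (i : Fin d) :
    shearR l c x i.castSucc = x i.castSucc := by
  simp [shearR, if_neg (castSucc_ne_last i)]

lemma shearR_last (l : Fin d → ℤ) (c : ℤ) (x : Fin (d+1) → ℝ) :
    shearR l c x (Fin.last d) =
      x (Fin.last d) + (∑ i, (l i : ℝ) * x i.castSucc) + (c : ℝ) := by
  simp [shearR]

lemma shearR_cancel (l : Fin d → ℤ) (c : ℤ) (x : Fin (d+1) → ℝ) :
    shearR (-l) (-c) (shearR l c x) = x := by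
  funext j
  by_cases hj : j = Fin.last d
  · subst hj
    rw [shearR_last, shearR_last]
    have : ∀ i : Fin d, shearR l c x i.castSucc = x i.castSucc := shearR_castSucc l c x
    simp only [this, Pi.neg_apply, Int.cast_neg, neg_mul, Finset.sum_neg_distrib]
    ring
  · obtain ⟨i, rfl⟩ := Fin.exists_castSucc_eq.2 hj
    rw [shearR_castSucc, shearR_castSucc]

lemma shearR_cancel' (l : Fin d → ℤ) (c : ℤ) (x : Fin (d+1) → ℝ) :
    shearR l c (shearR (-l) (-c) x) = x := by
  have := shearR_cancel (-l) (-c) x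
  simpa using this

lemma ratl_shearZ (l : Fin d → ℤ) (c : ℤ) (x : Fin (d+1) → ℤ) :
    ratl (shearZ l c x) = shearR l c (ratl x) := by
  funext j
  by_cases hj : j = Fin.last d
  · subst hj
    simp only [ratl, shearZ, shearR, if_pos rfl]
    push_cast
    rfl
  · simp [ratl, shearZ, shearR, if_neg hj]

lemma shearZ_cancel (l : Fin d → ℤ) (c : ℤ) (x : Fin (d+1) → ℤ) :
    shearZ (-l) (-c) (shearZ l c x) = x := by
  have h : ratl (shearZ (-l) (-c) (shearZ l c x)) = ratl x := by
    rw [ratl_shearZ, ratl_shearZ, shearR_cancel]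
  funext j
  have := congrFun h j
  simpa [ratl] using this

lemma shearZ_cancel' (l : Fin d → ℤ) (c : ℤ) (x : Fin (d+1) → ℤ) :
    shearZ l c (shearZ (-l) (-c) x) = x := by
  have := shearZ_cancel (-l) (-c) x
  simpa using this

lemma shearZ_injective (l : Fin d → ℤ) (c : ℤ) : Function.Injective (shearZ l c) :=
  Function.LeftInverse.injective (g := shearZ (-l) (-c)) (shearZ_cancel l c)

lemma shearZ_castSucc (l : Fin d → ℤ) (c : ℤ) (x : Fin (d+1) → ℤ) (i : Fin d) :
    shearZ l c x i.castSucc = x i.castSucc := by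
  simp [shearZ, if_neg (castSucc_ne_last i)]

lemma shearZ_last (l : Fin d → ℤ) (c : ℤ) (x : Fin (d+1) → ℤ) :
    shearZ l c x (Fin.last d) =
      x (Fin.last d) + (∑ i, l i * x i.castSucc) + c := by
  simp [shearZ]

lemma det_shearA (l : Fin d → ℤ) : (shearA l).det = 1 := by
  rw [Matrix.det_of_lowerTriangular (shearA l)]
  · apply Finset.prod_eq_one
    intro j _
    by_cases hj : j = Fin.last d
    · subst hj
      simp [shearA, Fin.snoc_last]
    · simp [shearA, if_neg hj]
  · intro i j hij
    have hlt : (i : Fin (d+1)) < j := hij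
    have hi : i ≠ Fin.last d := by
      intro h
      subst h
      exact absurd hlt (not_lt.2 (Fin.le_last j))
    have : j ≠ i := ne_of_gt hlt
    simp [shearA, if_neg hi, if_neg this]

/-- The shear as an affine map. -/
def shearAff (l : Fin d → ℤ) (c : ℤ) : (Fin (d+1) → ℝ) →ᵃ[ℝ] (Fin (d+1) → ℝ) where
  toFun := affMap (shearA l) (shearb c)
  linear := Matrix.mulVecLin ((shearA l).map (Int.cast : ℤ → ℝ))
  map_vadd' := by
    intro p v
    simp only [affMap, Matrix.mulVecLin_apply]
    have : v +ᵥ p = v + p := rfl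
    rw [this, Matrix.mulVec_add]
    funext j
    simp [add_assoc, add_comm, add_left_comm]

lemma shearAff_apply (l : Fin d → ℤ) (c : ℤ) (x : Fin (d+1) → ℝ) :
    shearAff l c x = affMap (shearA l) (shearb c) x := rfl

/-- Coordinate bound on a convex hull. -/
lemma hull_coord_bound {N : ℕ} {s : Set (Fin N → ℝ)} {B : ℝ}
    (hs : ∀ x ∈ s, ∀ j, |x j| ≤ B) :
    ∀ x ∈ convexHull ℝ s, ∀ j, |x j| ≤ B := by
  have hsub : s ⊆ Set.pi Set.univ (fun _ : Fin N => Set.Icc (-B) B) := by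
    intro x hx
    rw [Set.mem_univ_pi]
    intro j
    exact abs_le.1 (hs x hx j)
  have hconv : Convex ℝ (Set.pi Set.univ (fun _ : Fin N => Set.Icc (-B) B)) :=
    convex_pi fun _ _ => convex_Icc _ _
  intro x hx j
  have := convexHull_min hsub hconv hx
  rw [Set.mem_univ_pi] at this
  exact abs_le.2 (this j)

/-- Lattice points of a bounded set are finite. -/
lemma lattice_finite_of_bound {N : ℕ} {P : Set (Fin N → ℝ)} {B : ℝ}
    (h : ∀ x ∈ P, ∀ j, |x j| ≤ B) :
    {z : Fin N → ℤ | ratl z ∈ P}.Finite := by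
  have hsub : {z : Fin N → ℤ | ratl z ∈ P} ⊆
      Set.pi Set.univ (fun _ : Fin N => Set.Icc (-⌈B⌉) ⌈B⌉) := by
    intro z hz
    rw [Set.mem_univ_pi]
    intro j
    have hb := h (ratl z) hz j
    rw [ratl_apply] at hb
    have h1 : (z j : ℝ) ≤ ⌈B⌉ := le_trans (le_trans (le_abs_self _) hb) (Int.le_ceil B)
    have h2 : (-⌈B⌉ : ℝ) ≤ z j := by
      have := le_trans (neg_abs_le ((z j : ℝ))) (le_refl _)
      have hb' : -(B) ≤ (z j : ℝ) := by
        have := abs_le.1 hb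
        exact this.1
      have : (-(⌈B⌉ : ℝ)) ≤ -B := by
        simp only [neg_le_neg_iff]
        exact Int.le_ceil B
      linarith
    constructor
    · exact_mod_cast h2
    · exact_mod_cast h1
  exact Set.Finite.subset (Set.Finite.pi fun _ => Set.finite_Icc _ _) hsub

/-- Counting lattice points on a vertical segment: if a convex set with at most `n`
lattice points contains a lattice point `z` and a point `q` agreeing with `z` except in
the last coordinate, then the last coordinates differ by at most `n`. -/
lemma vertical_count {n : ℕ} {P' : Set (Fin (d+1) → ℝ)} (hconv : Convex ℝ P')
    (hfin : {z : Fin (d+1) → ℤ | ratl z ∈ P'}.Finite)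
    (hcard : {z : Fin (d+1) → ℤ | ratl z ∈ P'}.ncard ≤ n)
    {z : Fin (d+1) → ℤ} (hz : ratl z ∈ P') {q : Fin (d+1) → ℝ} (hq : q ∈ P')
    (hqz : ∀ j, j ≠ Fin.last d → q j = ratl z j) :
    |(z (Fin.last d) : ℝ) - q (Fin.last d)| ≤ n := by
  set y : ℤ := z (Fin.last d) with hy
  set h : ℝ := q (Fin.last d) with hh
  -- points on the vertical segment between q and ratl z are in P'
  have hseg : ∀ k : ℤ, (h ≤ (k : ℝ) ∧ (k : ℝ) ≤ y) ∨ ((y : ℝ) ≤ k ∧ (k : ℝ) ≤ h) →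
      ratl (Function.update z (Fin.last d) k) ∈ P' := by
    intro k hk
    by_cases hcase : (y : ℝ) = h
    · have hk' : (k : ℝ) = y := by
        rcases hk with ⟨h1, h2⟩ | ⟨h1, h2⟩ <;> linarith
      have hky : k = y := by exact_mod_cast hk'
      have hupd : Function.update z (Fin.last d) k = z := by
        funext j
        by_cases hj : j = Fin.last d
        · subst hj; rw [Function.update_self, hky, hy]
        · rw [Function.update_of_ne hj]
      rw [hupd]; exact hz
    · set θ : ℝ := ((k : ℝ) - h) / ((y : ℝ) - h) with hθ
      have hyh : (y : ℝ) - h ≠ 0 := sub_ne_zero.2 hcase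
      have hθ0 : 0 ≤ θ := by
        rcases hk with ⟨h1, h2⟩ | ⟨h1, h2⟩
        · exact div_nonneg_iff.2 (Or.inl ⟨by linarith, by linarith⟩)
        · exact div_nonneg_iff.2 (Or.inr ⟨by linarith, by linarith⟩)
      have hθ1 : 0 ≤ 1 - θ := by
        have hrw : 1 - θ = ((y : ℝ) - k) / ((y : ℝ) - h) := by
          rw [eq_div_iff hyh, hθ, sub_mul, div_mul_cancel₀ _ hyh]; ring
        rw [hrw]
        rcases hk with ⟨h1, h2⟩ | ⟨h1, h2⟩
        · exact div_nonneg_iff.2 (Or.inl ⟨by linarith, by linarith⟩)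
        · exact div_nonneg_iff.2 (Or.inr ⟨by linarith, by linarith⟩)
      have hmem := hconv hq hz hθ1 hθ0 (by ring : (1 - θ) + θ = 1)
      have heq : (1 - θ) • q + θ • ratl z = ratl (Function.update z (Fin.last d) k) := by
        funext j
        by_cases hj : j = Fin.last d
        · subst hj
          simp only [Pi.add_apply, Pi.smul_apply, smul_eq_mul, ratl_apply,
            Function.update_self]
          rw [← hh, ← hy]
          rw [hθ]
          field_simp
          ring
        · simp only [Pi.add_apply, Pi.smul_apply, smul_eq_mul, hqz j hj, ratl_apply,
            Function.update_of_ne hj]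
          ring
      rw [← heq]; exact hmem
  -- now count
  rcases le_or_gt h (y : ℝ) with hcase | hcase
  · -- h ≤ y
    have hceil : ⌈h⌉ ≤ y := Int.ceil_le.2 hcase
    set T : Finset ℤ := Finset.Icc ⌈h⌉ y with hT
    have hinj : Set.InjOn (fun k : ℤ => Function.update z (Fin.last d) k) ↑T := by
      intro a _ b _ hab
      have := congrFun hab (Fin.last d)
      simpa using this
    have hsub : (fun k : ℤ => Function.update z (Fin.last d) k) '' ↑T ⊆
        {w : Fin (d+1) → ℤ | ratl w ∈ P'} := by
      rintro _ ⟨k, hk, rfl⟩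
      rw [Finset.mem_coe, Finset.mem_Icc] at hk
      apply hseg
      left
      exact ⟨le_trans (Int.le_ceil h) (by exact_mod_cast hk.1), by exact_mod_cast hk.2⟩
    have hcount : T.card ≤ n := by
      have h1 : ((fun k : ℤ => Function.update z (Fin.last d) k) '' ↑T).ncard ≤ n :=
        le_trans (Set.ncard_le_ncard hsub hfin) hcard
      rwa [Set.ncard_image_of_injOn hinj, Set.ncard_coe_finset] at h1
    have hcZ : (y - ⌈h⌉ + 1 : ℤ) ≤ n := by
      have h0 : ((y + 1 - ⌈h⌉).toNat : ℤ) ≤ (n : ℤ) := by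
        exact_mod_cast (Int.card_Icc ⌈h⌉ y ▸ hcount)
      rw [Int.toNat_of_nonneg (by omega)] at h0
      omega
    have hcR : ((y : ℝ) - ⌈h⌉ + 1) ≤ n := by exact_mod_cast hcZ
    have hceil2 : ((⌈h⌉ : ℝ)) < h + 1 := Int.ceil_lt_add_one h
    rw [abs_of_nonneg (by linarith : (0:ℝ) ≤ (y:ℝ) - h)]
    linarith
  · -- y < h
    have hfloor : y ≤ ⌊h⌋ := Int.le_floor.2 (le_of_lt hcase)
    set T : Finset ℤ := Finset.Icc y ⌊h⌋ with hT
    have hinj : Set.InjOn (fun k : ℤ => Function.update z (Fin.last d) k) ↑T := by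
      intro a _ b _ hab
      have := congrFun hab (Fin.last d)
      simpa using this
    have hsub : (fun k : ℤ => Function.update z (Fin.last d) k) '' ↑T ⊆
        {w : Fin (d+1) → ℤ | ratl w ∈ P'} := by
      rintro _ ⟨k, hk, rfl⟩
      rw [Finset.mem_coe, Finset.mem_Icc] at hk
      apply hseg
      right
      exact ⟨by exact_mod_cast hk.1, le_trans (by exact_mod_cast hk.2) (Int.floor_le h)⟩
    have hcount : T.card ≤ n := by
      have h1 : ((fun k : ℤ => Function.update z (Fin.last d) k) '' ↑T).ncard ≤ n :=
        le_trans (Set.ncard_le_ncard hsub hfin) hcard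
      rwa [Set.ncard_image_of_injOn hinj, Set.ncard_coe_finset] at h1
    have hcZ : (⌊h⌋ - y + 1 : ℤ) ≤ n := by
      have h0 : ((⌊h⌋ + 1 - y).toNat : ℤ) ≤ (n : ℤ) := by
        exact_mod_cast (Int.card_Icc y ⌊h⌋ ▸ hcount)
      rw [Int.toNat_of_nonneg (by omega)] at h0
      omega
    have hcR : ((⌊h⌋ : ℝ)) - y + 1 ≤ n := by exact_mod_cast hcZ
    have hfloor2 : h - 1 < ⌊h⌋ := Int.sub_one_lt_floor h
    rw [abs_of_nonpos (by linarith : (y:ℝ) - h ≤ 0)]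
    linarith

end SimplexLift

open SimplexLift

/-- A lattice simplex has only finitely many equivalence classes of lifts of bounded
size. -/
theorem simplex_finitely_many_lifts (d n : ℕ) (V : Fin (d+1) → (Fin d → ℤ))
    (hV : AffineIndependent ℝ (fun i => ratl (V i))) :
    ∃ S : Set (Set (Fin (d+1) → ℝ)), S.Finite ∧
      ∀ P : Set (Fin (d+1) → ℝ), IsLatticePolytope P → latticeSize P ≤ n →
        proj '' P = convexHull ℝ (Set.range fun i => ratl (V i)) →
        ∃ P₀ ∈ S, LiftEquiv P P₀ := by
  classical
  -- bound on the coordinates of the simplex vertices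
  set m : ℤ := ∑ i, ∑ j, |V i j| with hm
  have hVm : ∀ i j, |V i j| ≤ m := by
    intro i j
    calc |V i j| ≤ ∑ j', |V i j'| :=
          Finset.single_le_sum (f := fun j' => |V i j'|)
            (fun j' _ => abs_nonneg _) (Finset.mem_univ j)
      _ ≤ m := by
          rw [hm]
          exact Finset.single_le_sum (f := fun i' => ∑ j', |V i' j'|)
            (fun i' _ => Finset.sum_nonneg fun j' _ => abs_nonneg _) (Finset.mem_univ i)
  have hm0 : 0 ≤ m := by
    rw [hm]
    exact Finset.sum_nonneg fun i _ => Finset.sum_nonneg fun j _ => abs_nonneg _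
  set K : ℤ := 2 * (d : ℤ) * m + (n : ℤ) + m + 2 with hK
  set Box : Finset (Fin (d+1) → ℤ) := Fintype.piFinset (fun _ => Finset.Icc (-K) K)
    with hBox
  refine ⟨(fun W : Finset (Fin (d+1) → ℤ) => convexHull ℝ (ratl '' ↑W)) '' ↑Box.powerset,
    Box.powerset.finite_toSet.image _, ?_⟩
  intro P hP hsize hproj
  obtain ⟨VP, hVPne, hPe⟩ := hP
  set f : Fin (d+1) → (Fin d → ℝ) := fun i => ratl (V i) with hf
  have hPconv : Convex ℝ P := hPe ▸ convex_convexHull ℝ _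
  -- coordinate bound on the simplex
  have hQb : ∀ x ∈ convexHull ℝ (Set.range f), ∀ j, |x j| ≤ (m : ℝ) := by
    apply hull_coord_bound
    rintro x ⟨i, rfl⟩ j
    have := hVm i j
    show |ratl (V i) j| ≤ (m:ℝ)
    rw [ratl_apply, ← Int.cast_abs]
    exact_mod_cast this
  -- points of P over the simplex vertices
  have hfib : ∀ i, ∃ p ∈ P, proj p = f i := by
    intro i
    have : f i ∈ convexHull ℝ (Set.range f) :=
      subset_convexHull ℝ _ (Set.mem_range_self i)
    rw [← hproj] at this
    obtain ⟨p, hp, hpe⟩ := this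
    exact ⟨p, hp, hpe⟩
  choose p hpP hpProj using hfib
  -- the difference vectors of the simplex are linearly independent
  set r : Fin d → (Fin d → ℝ) := fun i j => (V i.succ j : ℝ) - (V 0 j : ℝ) with hr
  have hli : LinearIndependent ℝ r := by
    have hV' := (affineIndependent_iff_linearIndependent_vsub ℝ
      (fun i => ratl (V i)) 0).mp hV
    have he : Function.Injective
        (fun i : Fin d => (⟨i.succ, Fin.succ_ne_zero i⟩ : {x : Fin (d+1) // x ≠ 0})) := by
      intro a b hab
      have := congrArg Subtype.val hab
      exact Fin.succ_injective d this
    have := hV'.comp _ he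
    have heq : ((fun i : {x : Fin (d+1) // x ≠ 0} =>
        ratl (V ↑i) -ᵥ ratl (V 0)) ∘
        fun i : Fin d => (⟨i.succ, Fin.succ_ne_zero i⟩ : {x : Fin (d+1) // x ≠ 0})) = r := by
      funext i
      funext j
      simp [hr, ratl, vsub_eq_sub]
    rwa [heq] at this
  have hspan : Submodule.span ℝ (Set.range r) = ⊤ :=
    hli.span_eq_top_of_card_eq_finrank' (by simp [Module.finrank_fin_fun])
  -- solve the linear system approximately with an integer vector
  set t : Fin d → ℝ := fun i => p i.succ (Fin.last d) - p 0 (Fin.last d) with ht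
  have hsolve : ∃ sol : Fin d → ℝ, ∀ i, ∑ j, r i j * sol j = -(t i) := by
    set N : Matrix (Fin d) (Fin d) ℝ := Matrix.of (fun i j => r i j) with hN
    have hinj : Function.Injective N.mulVecLin := by
      rw [← LinearMap.ker_eq_bot, Submodule.eq_bot_iff]
      intro x hx
      rw [LinearMap.mem_ker] at hx
      have hdot : ∀ i, ∑ j, r i j * x j = 0 := by
        intro i
        have := congrFun hx i
        simpa [Matrix.mulVecLin_apply, Matrix.mulVec, dotProduct, hN] using this
      have hxmem : x ∈ Submodule.span ℝ (Set.range r) := hspan ▸ Submodule.mem_top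
      obtain ⟨cc, hcc⟩ := (Submodule.mem_span_range_iff_exists_fun ℝ).mp hxmem
      have hself : ∑ j, x j * x j = 0 := by
        have hxj : ∀ j, ∑ i, cc i * r i j = x j := by
          intro j
          have := congrFun hcc j
          simpa [Finset.sum_apply] using this
        have hstep : ∑ j, x j * x j = ∑ i, cc i * (∑ j, r i j * x j) := by
          calc ∑ j, x j * x j = ∑ j, (∑ i, cc i * r i j) * x j := by
                congr 1
                funext j
                rw [hxj j]
            _ = ∑ j, ∑ i, (cc i * r i j) * x j := by
                congr 1
                funext j
                rw [Finset.sum_mul]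
            _ = ∑ i, ∑ j, (cc i * r i j) * x j := Finset.sum_comm
            _ = ∑ i, cc i * (∑ j, r i j * x j) := by
                congr 1
                funext i
                rw [Finset.mul_sum]
                congr 1
                funext j
                ring
        rw [hstep]
        simp [hdot]
      have hall := (Finset.sum_eq_zero_iff_of_nonneg
        (fun j _ => mul_self_nonneg (x j))).mp hself
      funext j
      exact mul_self_eq_zero.mp (hall j (Finset.mem_univ j))
    have hsurj := (LinearMap.injective_iff_surjective).mp hinj
    obtain ⟨sol, hsol⟩ := hsurj (-t)
    refine ⟨sol, fun i => ?_⟩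
    have := congrFun hsol i
    simpa [Matrix.mulVecLin_apply, Matrix.mulVec, dotProduct, hN] using this
  obtain ⟨sol, hsol⟩ := hsolve
  set l : Fin d → ℤ := fun j => ⌊sol j⌋ with hl
  set ρ : ℝ := p 0 (Fin.last d) + ∑ j, (l j : ℝ) * (V 0 j : ℝ) with hρ
  set c : ℤ := -⌈ρ⌉ with hc
  set t' : Fin (d+1) → ℝ :=
    fun i => p i (Fin.last d) + (∑ j, (l j : ℝ) * (V i j : ℝ)) + (c : ℝ) with ht'
  have hm0R : (0:ℝ) ≤ (m:ℝ) := by exact_mod_cast hm0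
  have hC : ∀ i, |t' i| ≤ 2 * (d : ℝ) * (m : ℝ) + 1 := by
    have hdm0 : 0 ≤ 2 * (d : ℝ) * (m : ℝ) := by positivity
    have ht'0 : |t' 0| ≤ 1 := by
      have h1 : t' 0 = ρ - ⌈ρ⌉ := by
        simp only [ht', hρ, hc]
        push_cast
        ring
      rw [h1, abs_le]
      refine ⟨?_, ?_⟩
      · have := Int.ceil_lt_add_one ρ
        linarith
      · have := Int.le_ceil ρ
        linarith
    intro i
    induction i using Fin.cases with
    | zero => linarith [ht'0]
    | succ i0 =>
      have hsum1 : (∑ j, (l j:ℝ) * (V i0.succ j:ℝ)) - (∑ j, (l j:ℝ) * (V 0 j:ℝ))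
          = ∑ j, r i0 j * (l j:ℝ) := by
        rw [← Finset.sum_sub_distrib]
        congr 1
        funext j
        simp only [hr]
        ring
      have expand : t' i0.succ - t' 0 = t i0 + ∑ j, r i0 j * (l j : ℝ) := by
        simp only [ht', ht]
        linear_combination hsum1
      have hti : t i0 = -∑ j, r i0 j * sol j := by linarith [hsol i0]
      have hsum2 : ∑ j, r i0 j * ((l j:ℝ) - sol j)
          = (∑ j, r i0 j * (l j:ℝ)) - ∑ j, r i0 j * sol j := by
        rw [← Finset.sum_sub_distrib]
        congr 1
        funext j
        ring
      have hdiff : t' i0.succ - t' 0 = ∑ j, r i0 j * ((l j:ℝ) - sol j) := by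
        rw [expand, hti, hsum2]
        ring
      have hterm : ∀ j, |r i0 j * ((l j:ℝ) - sol j)| ≤ 2 * (m:ℝ) := by
        intro j
        rw [abs_mul]
        have h1 : |r i0 j| ≤ 2 * (m:ℝ) := by
          have ha : |(V i0.succ j : ℝ)| ≤ (m:ℝ) := by
            rw [← Int.cast_abs]
            exact_mod_cast hVm i0.succ j
          have hb : |(V 0 j : ℝ)| ≤ (m:ℝ) := by
            rw [← Int.cast_abs]
            exact_mod_cast hVm 0 j
          calc |r i0 j| ≤ |(V i0.succ j : ℝ)| + |(V 0 j : ℝ)| := abs_sub _ _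
            _ ≤ 2 * (m:ℝ) := by linarith
        have h2 : |(l j:ℝ) - sol j| ≤ 1 := by
          rw [abs_le]
          simp only [hl]
          constructor
          · have := Int.sub_one_lt_floor (sol j)
            push_cast at this
            linarith
          · have := Int.floor_le (sol j)
            push_cast at this
            linarith
        calc |r i0 j| * |(l j:ℝ) - sol j| ≤ (2 * (m:ℝ)) * 1 := by
              apply mul_le_mul h1 h2 (abs_nonneg _) (by linarith)
          _ = 2 * (m:ℝ) := by ring
      have hsumb : |t' i0.succ - t' 0| ≤ 2 * (d:ℝ) * (m:ℝ) := by
        rw [hdiff]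
        calc |∑ j, r i0 j * ((l j:ℝ) - sol j)|
            ≤ ∑ j, |r i0 j * ((l j:ℝ) - sol j)| := Finset.abs_sum_le_sum_abs _ _
          _ ≤ ∑ _j : Fin d, 2 * (m:ℝ) := Finset.sum_le_sum fun j _ => hterm j
          _ = (d:ℝ) * (2 * (m:ℝ)) := by
              rw [Finset.sum_const, Finset.card_univ, Fintype.card_fin, nsmul_eq_mul]
          _ = 2 * (d:ℝ) * (m:ℝ) := by ring
      have := abs_sub_abs_le_abs_sub (t' i0.succ) (t' 0)
      have habs := abs_add_le (t' i0.succ - t' 0) (t' 0)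
      have : t' i0.succ = (t' i0.succ - t' 0) + t' 0 := by ring
      calc |t' i0.succ| = |(t' i0.succ - t' 0) + t' 0| := by rw [← this]
        _ ≤ |t' i0.succ - t' 0| + |t' 0| := abs_add_le _ _
        _ ≤ 2 * (d:ℝ) * (m:ℝ) + 1 := by linarith [ht'0]
  -- the shear transformation
  have hdet : IsUnit (shearA l).det := by
    rw [det_shearA]
    exact isUnit_one
  -- lattice points of the image
  have hlatim : {z : Fin (d+1) → ℤ | ratl z ∈ affMap (shearA l) (shearb c) '' P}
      = shearZ l c '' {z : Fin (d+1) → ℤ | ratl z ∈ P} := by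
    ext z'
    constructor
    · rintro ⟨x, hx, hxe⟩
      refine ⟨shearZ (-l) (-c) z', ?_, shearZ_cancel' l c z'⟩
      have : ratl (shearZ (-l) (-c) z') = x := by
        rw [ratl_shearZ, ← hxe, affMap_shear, shearR_cancel]
      rw [Set.mem_setOf_eq, this]
      exact hx
    · rintro ⟨z, hz, rfl⟩
      rw [Set.mem_setOf_eq, ratl_shearZ, ← affMap_shear]
      exact Set.mem_image_of_mem _ hz
  -- lattice points of P are finite
  have hPb : ∀ x ∈ P, ∀ j, |x j| ≤ ((∑ v ∈ VP, ∑ j, |v j| : ℤ) : ℝ) := by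
    rw [hPe]
    apply hull_coord_bound
    rintro x ⟨v, hv, rfl⟩ j
    rw [ratl_apply, ← Int.cast_abs]
    have h1 : |v j| ≤ ∑ j', |v j'| :=
      Finset.single_le_sum (f := fun j' => |v j'|)
        (fun j' _ => abs_nonneg _) (Finset.mem_univ j)
    have h2 : ∑ j', |v j'| ≤ ∑ v' ∈ VP, ∑ j', |v' j'| :=
      Finset.single_le_sum (f := fun v' => ∑ j', |v' j'|)
        (fun v' _ => Finset.sum_nonneg fun j' _ => abs_nonneg _)
        (Finset.mem_coe.mp hv)
    exact_mod_cast le_trans h1 h2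
  have hfinP : {z : Fin (d+1) → ℤ | ratl z ∈ P}.Finite := lattice_finite_of_bound hPb
  have hfinP' : {z : Fin (d+1) → ℤ | ratl z ∈ affMap (shearA l) (shearb c) '' P}.Finite := by
    rw [hlatim]
    exact hfinP.image _
  have hcardP' :
      {z : Fin (d+1) → ℤ | ratl z ∈ affMap (shearA l) (shearb c) '' P}.ncard ≤ n := by
    rw [hlatim, Set.ncard_image_of_injective _ (shearZ_injective l c)]
    exact hsize
  have hconvP' : Convex ℝ (affMap (shearA l) (shearb c) '' P) := by
    have : affMap (shearA l) (shearb c) '' P = shearAff l c '' P := rfl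
    rw [this]
    exact hPconv.affine_image _
  -- the image vertex set
  set W : Finset (Fin (d+1) → ℤ) := VP.image (shearZ l c) with hW
  -- image of P is the hull of the image vertex set
  have himg : affMap (shearA l) (shearb c) '' P = convexHull ℝ (ratl '' ↑W) := by
    have h0 : affMap (shearA l) (shearb c) '' P = shearAff l c '' P := rfl
    rw [h0, hPe, AffineMap.image_convexHull]
    congr 1
    rw [hW, Finset.coe_image, ← Set.image_comp, ← Set.image_comp]
    apply Set.image_congr
    intro v _
    show shearAff l c (ratl v) = ratl (shearZ l c v)
    rw [shearAff_apply, affMap_shear, ratl_shearZ]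
  -- vertical coordinate bound for lattice points of the image
  have hvert : ∀ z' : Fin (d+1) → ℤ, ratl z' ∈ affMap (shearA l) (shearb c) '' P →
      (∀ i : Fin d, |z' i.castSucc| ≤ m) ∧ |z' (Fin.last d)| ≤ K := by
    intro z' hz'
    obtain ⟨v, hvP, hve⟩ : ∃ v, ratl v ∈ P ∧ shearZ l c v = z' := by
      have hz2 : z' ∈ shearZ l c '' {z : Fin (d+1) → ℤ | ratl z ∈ P} := by
        rw [← hlatim]
        exact hz'
      obtain ⟨v, hv, hve⟩ := hz2
      exact ⟨v, hv, hve⟩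
    -- horizontal bounds
    have hhor : ∀ i : Fin d, |(v i.castSucc : ℝ)| ≤ (m:ℝ) := by
      intro i
      have h1 : proj (ratl v) ∈ convexHull ℝ (Set.range f) := by
        rw [← hproj]
        exact Set.mem_image_of_mem _ hvP
      have := hQb _ h1 i
      simpa [proj, ratl_apply] using this
    have hhorZ : ∀ i : Fin d, |v i.castSucc| ≤ m := by
      intro i
      have := hhor i
      rw [← Int.cast_abs] at this
      exact_mod_cast this
    refine ⟨?_, ?_⟩
    · intro i
      rw [← hve, shearZ_castSucc]
      exact hhorZ i
    -- vertical bound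
    · -- barycentric coordinates of the projection of v
      set v' : Fin d → ℤ := fun i => v i.castSucc with hv'
      have hv'Q : ratl v' ∈ convexHull ℝ (Set.range f) := by
        rw [← hproj]
        refine ⟨ratl v, hvP, ?_⟩
        funext i
        simp [proj, ratl_apply, hv']
      rw [convexHull_range_eq_exists_affineCombination] at hv'Q
      obtain ⟨s, w, hw0, hw1, hcomb⟩ := hv'Q
      set lam : Fin (d+1) → ℝ := fun i => if i ∈ s then w i else 0 with hlam
      have hlam0 : ∀ i, 0 ≤ lam i := by
        intro i
        simp only [hlam]
        split
        · exact hw0 i ‹_›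
        · exact le_refl 0
      have hlam1 : ∑ i, lam i = 1 := by
        rw [hlam]
        rw [Finset.sum_ite_mem, Finset.univ_inter]
        exact hw1
      have hlamc : ∑ i, lam i • f i = ratl v' := by
        rw [← hcomb, Finset.affineCombination_eq_linear_combination s f w hw1]
        have hstep : ∀ i ∈ Finset.univ, lam i • f i
            = if i ∈ s then w i • f i else 0 := by
          intro i _
          simp only [hlam]
          split
          · rfl
          · rw [zero_smul]
        rw [Finset.sum_congr rfl hstep, Finset.sum_ite_mem, Finset.univ_inter]
      -- the comparison point in P over the projection of v
      set sp : Fin (d+1) → ℝ := ∑ i, lam i • p i with hsp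
      have hspP : sp ∈ P :=
        hPconv.sum_mem (fun i _ => hlam0 i) hlam1 (fun i _ => hpP i)
      set q : Fin (d+1) → ℝ := shearR l c sp with hq
      have hqP' : q ∈ affMap (shearA l) (shearb c) '' P :=
        ⟨sp, hspP, affMap_shear l c sp⟩
      have hspcast : ∀ i0 : Fin d, sp i0.castSucc = (v i0.castSucc : ℝ) := by
        intro i0
        have h1 : sp i0.castSucc = ∑ i, lam i * f i i0 := by
          rw [hsp]
          simp only [Finset.sum_apply, Pi.smul_apply, smul_eq_mul]
          refine Finset.sum_congr rfl fun i _ => ?_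
          have hp2 : p i i0.castSucc = f i i0 := congrFun (hpProj i) i0
          rw [hp2]
        have h2 : (∑ i, lam i • f i) i0 = ∑ i, lam i * f i i0 := by
          simp [Finset.sum_apply]
        rw [h1, ← h2, hlamc]
        rfl
      have hqz : ∀ j, j ≠ Fin.last d → q j = ratl z' j := by
        intro j hj
        obtain ⟨i0, rfl⟩ := Fin.exists_castSucc_eq.2 hj
        rw [hq, shearR_castSucc, hspcast i0, ratl_apply, ← hve, shearZ_castSucc]
      have hqlast : q (Fin.last d) = ∑ i, lam i * t' i := by
        rw [hq, shearR_last]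
        have hsplast : sp (Fin.last d) = ∑ i, lam i * p i (Fin.last d) := by
          rw [hsp]
          simp [Finset.sum_apply]
        have hspcs : ∀ j : Fin d, sp j.castSucc = ∑ i, lam i * (V i j : ℝ) := by
          intro j
          rw [hsp]
          simp only [Finset.sum_apply, Pi.smul_apply, smul_eq_mul]
          refine Finset.sum_congr rfl fun i _ => ?_
          have hp2 : p i j.castSucc = ((V i j : ℤ) : ℝ) := congrFun (hpProj i) j
          rw [hp2]
        have hsum3 : ∑ j, (l j : ℝ) * sp j.castSucc
            = ∑ i, lam i * (∑ j, (l j : ℝ) * (V i j : ℝ)) := by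
          calc ∑ j, (l j : ℝ) * sp j.castSucc
              = ∑ j, ∑ i, (l j : ℝ) * (lam i * (V i j : ℝ)) := by
                congr 1
                funext j
                rw [hspcs j, Finset.mul_sum]
            _ = ∑ i, ∑ j, (l j : ℝ) * (lam i * (V i j : ℝ)) := Finset.sum_comm
            _ = ∑ i, lam i * (∑ j, (l j : ℝ) * (V i j : ℝ)) := by
                congr 1
                funext i
                rw [Finset.mul_sum]
                congr 1
                funext j
                ring
        have hcc2 : (c : ℝ) = ∑ i, lam i * (c : ℝ) := by
          rw [← Finset.sum_mul, hlam1, one_mul]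
        rw [hsplast, hsum3]
        conv_lhs => rw [hcc2]
        rw [← Finset.sum_add_distrib, ← Finset.sum_add_distrib]
        congr 1
        funext i
        simp only [ht']
        ring
      have hqb : |q (Fin.last d)| ≤ 2 * (d:ℝ) * (m:ℝ) + 1 := by
        rw [hqlast]
        calc |∑ i, lam i * t' i| ≤ ∑ i, |lam i * t' i| := Finset.abs_sum_le_sum_abs _ _
          _ ≤ ∑ i, lam i * (2 * (d:ℝ) * (m:ℝ) + 1) := by
              apply Finset.sum_le_sum
              intro i _
              rw [abs_mul, abs_of_nonneg (hlam0 i)]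
              exact mul_le_mul_of_nonneg_left (hC i) (hlam0 i)
          _ = 2 * (d:ℝ) * (m:ℝ) + 1 := by rw [← Finset.sum_mul, hlam1, one_mul]
      have hvc := vertical_count hconvP' hfinP' hcardP' hz' hqP' hqz
      have hzb : |(z' (Fin.last d) : ℝ)| ≤ 2 * (d:ℝ) * (m:ℝ) + 1 + (n:ℝ) := by
        calc |(z' (Fin.last d) : ℝ)|
            = |((z' (Fin.last d) : ℝ) - q (Fin.last d)) + q (Fin.last d)| := by ring_nf
          _ ≤ |(z' (Fin.last d) : ℝ) - q (Fin.last d)| + |q (Fin.last d)| := abs_add_le _ _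
          _ ≤ 2 * (d:ℝ) * (m:ℝ) + 1 + (n:ℝ) := by linarith only [hvc, hqb]
      have hKR : (2 * (d:ℝ) * (m:ℝ) + 1 + (n:ℝ)) ≤ (K:ℝ) := by
        rw [hK]
        push_cast
        linarith only [hm0R]
      have : |(z' (Fin.last d) : ℝ)| ≤ (K:ℝ) := le_trans hzb hKR
      rw [← Int.cast_abs] at this
      exact_mod_cast this
  -- conclusion
  refine ⟨convexHull ℝ (ratl '' ↑W), ?_, ?_⟩
  · refine ⟨W, ?_, rfl⟩
    rw [Finset.mem_coe, Finset.mem_powerset]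
    intro u hu
    obtain ⟨v, hv, rfl⟩ := Finset.mem_image.mp hu
    have huP' : ratl (shearZ l c v) ∈ affMap (shearA l) (shearb c) '' P := by
      have hvmem : ratl v ∈ P := by
        rw [hPe]
        exact subset_convexHull ℝ _ ⟨v, Finset.mem_coe.mpr hv, rfl⟩
      rw [ratl_shearZ, ← affMap_shear]
      exact Set.mem_image_of_mem _ hvmem
    have hb := hvert _ huP'
    rw [hBox, Fintype.mem_piFinset]
    intro j
    rw [Finset.mem_Icc]
    have h2dm : (0:ℤ) ≤ 2 * (d:ℤ) * m :=
      mul_nonneg (mul_nonneg (by norm_num) (Int.natCast_nonneg d)) hm0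
    have hn0 : (0:ℤ) ≤ (n:ℤ) := Int.natCast_nonneg n
    have hmK : m ≤ K := by rw [hK]; linarith only [h2dm, hn0]
    by_cases hj : j = Fin.last d
    · subst hj
      exact abs_le.mp hb.2
    · obtain ⟨i0, rfl⟩ := Fin.exists_castSucc_eq.2 hj
      have habs := abs_le.mp (hb.1 i0)
      exact ⟨by linarith only [habs.1, hmK], by linarith only [habs.2, hmK]⟩
  · refine ⟨shearA l, shearb c, hdet, himg, ?_⟩
    intro x _
    funext i
    show affMap (shearA l) (shearb c) x i.castSucc = x i.castSucc
    rw [affMap_shear]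
    exact shearR_castSucc l c x i
end
end

section
/- Let \pi : \mathbb{R}^d \to \mathbb{R}^{d-1} forget the last coordinate, let Q \subset \mathbb{R}^{d-1} be a (d-1)-polytope and q an interior point of Q. Then there exists a constant c (depending only on Q and q) such that every d-polytope P \subset \mathbb{R}^d with \pi(P) = Q satisfies vol(P) \le c \cdot length(P \cap \pi^{-1}(q)). -/
open Set MeasureTheory

noncomputable section

open Pointwise

lemma cont_snoc (d : ℕ) (x : Fin d → ℝ) : Continuous (fun t : ℝ => (Fin.snoc x t : Fin (d+1) → ℝ)) := by
  refine continuous_pi fun i => ?_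
  refine Fin.lastCases ?_ ?_ i
  · simpa [Fin.snoc_last] using (continuous_id' : Continuous fun a : ℝ => a)
  · intro j; simpa [Fin.snoc_castSucc] using continuous_const

lemma fubini_snoc (d : ℕ) (P : Set (Fin (d+1) → ℝ)) (hP : MeasurableSet P) :
    volume P = ∫⁻ x : Fin d → ℝ, volume {t : ℝ | Fin.snoc x t ∈ P} := by
  have hmp := MeasureTheory.volume_preserving_piFinSuccAbove (fun _ : Fin (d+1) => ℝ) (Fin.last d)
  set e := MeasurableEquiv.piFinSuccAbove (fun _ : Fin (d+1) => ℝ) (Fin.last d)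
  have h1 : volume P = volume (e.symm ⁻¹' P) := (hmp.symm e).measure_preimage hP.nullMeasurableSet |>.symm
  rw [h1, Measure.volume_eq_prod, Measure.prod_apply_symm (e.symm.measurable hP)]
  congr 1
  funext x
  congr 1
  ext t
  simp only [mem_preimage, mem_setOf_eq]
  have : e.symm (t, x) = Fin.snoc x t := by
    simp [e, MeasurableEquiv.piFinSuccAbove, Fin.insertNthEquiv, Fin.insertNth_last']
  rw [this]

lemma snoc_combo (d : ℕ) (a b : ℝ) (x y : Fin d → ℝ) (t s : ℝ) :
    (Fin.snoc (a • x + b • y) (a * t + b * s) : Fin (d+1) → ℝ)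
      = a • (Fin.snoc x t : Fin (d+1) → ℝ) + b • (Fin.snoc y s : Fin (d+1) → ℝ) := by
  funext i
  refine Fin.lastCases ?_ ?_ i
  · simp [Fin.snoc_last]
  · intro j; simp [Fin.snoc_castSucc]

lemma snoc_proj (d : ℕ) (p : Fin (d+1) → ℝ) :
    (Fin.snoc (proj p) (p (Fin.last d)) : Fin (d+1) → ℝ) = p := by
  funext i
  refine Fin.lastCases ?_ ?_ i
  · simp [Fin.snoc_last]
  · intro j; simp [Fin.snoc_castSucc, proj]


/-- Volume of a polytope projecting onto Q is bounded by a constant times the length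
of the fiber over a fixed interior point q of Q. -/
theorem volume_bounded_by_fiber_length (d : ℕ) (Q : Set (Fin d → ℝ))
    (hQ : ∃ V : Finset (Fin d → ℝ), Q = convexHull ℝ ↑V)
    (hQfull : affineSpan ℝ Q = ⊤) (q : Fin d → ℝ) (hq : q ∈ interior Q) :
    ∃ c : ℝ, ∀ P : Set (Fin (d+1) → ℝ),
      (∃ V : Finset (Fin (d+1) → ℝ), P = convexHull ℝ ↑V) →
      affineSpan ℝ P = ⊤ →
      proj '' P = Q →
      (volume P).toReal ≤ c * (volume {t : ℝ | Fin.snoc q t ∈ P}).toReal := by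
  -- geometric setup in the base
  have hQc : IsCompact Q := by
    obtain ⟨V, hV⟩ := hQ
    exact hV ▸ V.finite_toSet.isCompact_convexHull (𝕜 := ℝ)
  obtain ⟨ε, εpos, hball⟩ : ∃ ε > 0, Metric.ball q ε ⊆ Q :=
    Metric.mem_nhds_iff.mp (mem_interior_iff_mem_nhds.mp hq)
  obtain ⟨R₀, hR₀⟩ := hQc.isBounded.subset_closedBall q
  set R : ℝ := max R₀ 1 with hRdef
  have hRpos : (0:ℝ) < R := lt_of_lt_of_le one_pos (le_max_right _ _)
  have hR : Q ⊆ Metric.closedBall q R :=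
    hR₀.trans (Metric.closedBall_subset_closedBall (le_max_left _ _))
  set δ : ℝ := ε / (2 * R) with hδdef
  have hδpos : (0:ℝ) < δ := by positivity
  set a : ℝ := δ / (1 + δ) with hadef
  set b : ℝ := 1 / (1 + δ) with hbdef
  have h1δ : (0:ℝ) < 1 + δ := by linarith
  have hapos : (0:ℝ) < a := by positivity
  have hbpos : (0:ℝ) < b := by positivity
  have hab : a + b = 1 := by rw [hadef, hbdef]; field_simp; ring
  set K : ℝ := (1 + δ) / δ with hKdef
  have hKpos : (0:ℝ) < K := by positivity
  have haK : a⁻¹ = K := by rw [hadef, hKdef, inv_div]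
  refine ⟨K * (volume Q).toReal, ?_⟩
  intro P hPpoly hPfull hproj
  obtain ⟨V, hV⟩ := hPpoly
  have hPc : IsCompact P := hV ▸ V.finite_toSet.isCompact_convexHull (𝕜 := ℝ)
  have hPconv : Convex ℝ P := hV ▸ convex_convexHull ℝ _
  have hPm : MeasurableSet P := hPc.isClosed.measurableSet
  set F : (Fin d → ℝ) → Set ℝ := fun x => {t : ℝ | Fin.snoc x t ∈ P} with hFdef
  -- fibers are measurable and over points not in Q they are empty
  have hFm : ∀ x, MeasurableSet (F x) := fun x =>
    (hPc.isClosed.preimage (cont_snoc d x)).measurableSet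
  have hFempty : ∀ x, x ∉ Q → F x = ∅ := by
    intro x hx
    ext t
    simp only [hFdef, mem_setOf_eq, mem_empty_iff_false, iff_false]
    intro ht
    apply hx
    rw [← hproj]
    refine ⟨Fin.snoc x t, ht, ?_⟩
    funext j
    simp [proj, Fin.snoc_castSucc]
  -- key comparison of fibers
  have hkey : ∀ x ∈ Q, volume (F x) ≤ ENNReal.ofReal K * volume (F q) := by
    intro x hx
    set y : Fin d → ℝ := q + δ • (q - x) with hydef
    have hyQ : y ∈ Q := by
      apply hball
      have hdist : dist y q = δ * dist q x := by
        rw [hydef, dist_eq_norm]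
        simp only [add_sub_cancel_left]
        rw [norm_smul, Real.norm_eq_abs, abs_of_pos hδpos, dist_eq_norm]
      have hxq : dist q x ≤ R := by
        rw [dist_comm]; exact Metric.mem_closedBall.mp (hR hx)
      have : dist y q ≤ δ * R := by
        rw [hdist]; exact mul_le_mul_of_nonneg_left hxq hδpos.le
      have hlt : δ * R < ε := by
        rw [hδdef]; rw [div_mul_eq_mul_div, mul_comm]
        rw [div_lt_iff₀ (by positivity)]
        nlinarith
      exact Metric.mem_ball.mpr (lt_of_le_of_lt this hlt)
    have hcombo : a • x + b • y = q := by
      funext i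
      simp only [hydef, Pi.add_apply, Pi.smul_apply, Pi.sub_apply, smul_eq_mul]
      rw [hadef, hbdef]
      field_simp
      ring
    -- pick a point of P over y
    have hyP : y ∈ proj '' P := hproj ▸ hyQ
    obtain ⟨p, hpP, hpy⟩ := hyP
    set s : ℝ := p (Fin.last d) with hsdef
    have hsF : Fin.snoc y s = p := by rw [← hpy, hsdef]; exact snoc_proj d p
    -- affine image of fiber over x lands in fiber over q
    have himg : (fun t => b * s + a * t) '' F x ⊆ F q := by
      rintro u ⟨t, htF, rfl⟩
      have : (Fin.snoc q (a * t + b * s) : Fin (d+1) → ℝ) ∈ P := by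
        rw [← hcombo, snoc_combo]
        exact hPconv htF (hsF ▸ hpP) hapos.le hbpos.le hab
      simpa [hFdef, add_comm] using this
    have hvol_img : volume ((fun t => b * s + a * t) '' F x)
        = ENNReal.ofReal a * volume (F x) := by
      have : (fun t => b * s + a * t) '' F x = (b * s) +ᵥ (a • F x) := by
        rw [← Set.image_vadd, ← Set.image_smul, Set.image_image]
        rfl
      rw [this, measure_vadd, Measure.addHaar_smul]
      congr 1
      rw [Module.finrank_self, pow_one, abs_of_pos hapos]
    have hle : ENNReal.ofReal a * volume (F x) ≤ volume (F q) := by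
      rw [← hvol_img]
      exact measure_mono himg
    have ha0 : ENNReal.ofReal a ≠ 0 := by
      simp [ENNReal.ofReal_eq_zero, not_le, hapos]
    have haT : ENNReal.ofReal a ≠ ⊤ := ENNReal.ofReal_ne_top
    calc volume (F x) = (ENNReal.ofReal a)⁻¹ * (ENNReal.ofReal a * volume (F x)) := by
          rw [← mul_assoc, ENNReal.inv_mul_cancel ha0 haT, one_mul]
      _ ≤ (ENNReal.ofReal a)⁻¹ * volume (F q) := mul_le_mul_right hle _
      _ = ENNReal.ofReal K * volume (F q) := by
          rw [← ENNReal.ofReal_inv_of_pos hapos, haK]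
  -- Fubini and integral bound
  have hQm : MeasurableSet Q := hQc.isClosed.measurableSet
  have hbound : volume P ≤ ENNReal.ofReal K * volume (F q) * volume Q := by
    rw [fubini_snoc d P hPm]
    have : ∀ x, volume (F x) ≤ Q.indicator (fun _ => ENNReal.ofReal K * volume (F q)) x := by
      intro x
      by_cases hx : x ∈ Q
      · rw [Set.indicator_of_mem hx]; exact hkey x hx
      · rw [Set.indicator_of_notMem hx, hFempty x hx]; simp
    calc ∫⁻ x, volume (F x) ≤ ∫⁻ x, Q.indicator (fun _ => ENNReal.ofReal K * volume (F q)) x :=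
          lintegral_mono this
      _ = ENNReal.ofReal K * volume (F q) * volume Q := by
          rw [lintegral_indicator hQm, setLIntegral_const]
  -- finiteness
  obtain ⟨M, hM⟩ := hPc.isBounded.subset_closedBall 0
  have hFqb : F q ⊆ Metric.closedBall 0 M := by
    intro t ht
    have h1 : (Fin.snoc q t : Fin (d+1) → ℝ) ∈ Metric.closedBall (0 : Fin (d+1) → ℝ) M := hM ht
    rw [Metric.mem_closedBall, dist_zero_right] at h1
    have h2 : ‖t‖ ≤ ‖(Fin.snoc q t : Fin (d+1) → ℝ)‖ := by
      have := norm_le_pi_norm (Fin.snoc q t : Fin (d+1) → ℝ) (Fin.last d)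
      simpa using this
    rw [Metric.mem_closedBall, dist_zero_right]
    exact h2.trans h1
  have hFq_fin : volume (F q) ≠ ⊤ :=
    ((measure_mono hFqb).trans_lt (measure_closedBall_lt_top)).ne
  have hQ_fin : volume Q ≠ ⊤ := hQc.measure_lt_top.ne
  have hRHS_fin : ENNReal.ofReal K * volume (F q) * volume Q ≠ ⊤ :=
    ENNReal.mul_ne_top (ENNReal.mul_ne_top ENNReal.ofReal_ne_top hFq_fin) hQ_fin
  have := ENNReal.toReal_mono hRHS_fin hbound
  refine this.trans (le_of_eq ?_)
  rw [ENNReal.toReal_mul, ENNReal.toReal_mul, ENNReal.toReal_ofReal hKpos.le]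
  ring
end
end

section
/- Every lattice polytope with at least one interior lattice point has only finitely many equivalence classes of lifts of bounded size: if Q \subset \mathbb{R}^{d-1} is a non-hollow lattice (d-1)-polytope and n \in \mathbb{N}, then there are finitely many equivalence classes of lattice d-polytopes P with at most n lattice points projecting onto Q under the coordinate projection. -/
open Set MeasureTheory

noncomputable section

namespace NFL
variable {d : ℕ}

lemma proj_snoc (y : Fin d → ℝ) (t : ℝ) : proj (Fin.snoc y t) = y := by
  funext i; simp [proj]

lemma snoc_proj (x : Fin (d+1) → ℝ) : Fin.snoc (proj x) (x (Fin.last d)) = x := by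
  funext i
  induction i using Fin.lastCases with
  | last => simp
  | cast j => simp [proj]

lemma ratl_snoc (z : Fin d → ℤ) (k : ℤ) :
    ratl (Fin.snoc z k : Fin (d+1) → ℤ) = Fin.snoc (ratl z) (k : ℝ) := by
  funext i
  induction i using Fin.lastCases with
  | last => simp [ratl]
  | cast j => simp [ratl]

/-- height set of `P` over a point `y`. -/
def hts (P : Set (Fin (d+1) → ℝ)) (y : Fin d → ℝ) : Set ℝ := {t : ℝ | Fin.snoc y t ∈ P}

lemma sum_snoc {ι : Type*} (s : Finset ι) (c : ι → ℝ) (y : ι → Fin d → ℝ) (t : ι → ℝ) :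
    (∑ i ∈ s, c i • (Fin.snoc (y i) (t i) : Fin (d+1) → ℝ))
      = Fin.snoc (∑ i ∈ s, c i • y i) (∑ i ∈ s, c i * t i) := by
  funext k
  induction k using Fin.lastCases with
  | last => simp [Finset.sum_apply]
  | cast j => simp [Finset.sum_apply]

lemma comb_mem_hts {P : Set (Fin (d+1) → ℝ)} (hP : Convex ℝ P) {ι : Type*} [Fintype ι]
    (c : ι → ℝ) (y : ι → Fin d → ℝ) (t : ι → ℝ)
    (hc : ∀ i, 0 ≤ c i) (hsum : ∑ i, c i = 1) (hmem : ∀ i, t i ∈ hts P (y i)) :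
    (∑ i, c i * t i) ∈ hts P (∑ i, c i • y i) := by
  have h := hP.sum_mem (t := Finset.univ) (fun i _ => hc i) hsum
    (fun i _ => hmem i : ∀ i ∈ Finset.univ, (Fin.snoc (y i) (t i) : Fin (d+1) → ℝ) ∈ P)
  rwa [sum_snoc] at h

lemma hts_convex {P : Set (Fin (d+1) → ℝ)} (hP : Convex ℝ P) (y : Fin d → ℝ) :
    Convex ℝ (hts P y) := by
  intro t ht t' ht' a b ha hb hab
  have h : a • (Fin.snoc y t : Fin (d+1) → ℝ) + b • (Fin.snoc y t' : Fin (d+1) → ℝ)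
      = (Fin.snoc y (a * t + b * t') : Fin (d+1) → ℝ) := by
    funext k
    induction k using Fin.lastCases with
    | last => simp
    | cast j =>
      simp only [Pi.add_apply, Pi.smul_apply, Fin.snoc_castSucc, smul_eq_mul]
      rw [← add_mul, hab, one_mul]
  have := hP ht ht' ha hb hab
  rw [h] at this
  exact this

lemma int_count {a b : ℝ} {n : ℕ} (T : Set ℤ) (hT : T.Finite) (hn : T.ncard ≤ n)
    (hsub : ∀ k : ℤ, a ≤ (k : ℝ) → (k : ℝ) ≤ b → k ∈ T) : b - a ≤ n + 1 := by
  by_cases hc : (⌈a⌉ : ℤ) ≤ ⌊b⌋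
  · have h1 : ((Finset.Icc ⌈a⌉ ⌊b⌋ : Finset ℤ) : Set ℤ) ⊆ T := by
      intro k hk
      rw [Finset.coe_Icc, Set.mem_Icc] at hk
      exact hsub k (by exact_mod_cast Int.ceil_le.mp hk.1) (by exact_mod_cast Int.le_floor.mp hk.2)
    have h2 : (Finset.Icc (⌈a⌉ : ℤ) ⌊b⌋).card ≤ n := by
      rw [← Set.ncard_coe_finset]
      exact le_trans (Set.ncard_le_ncard h1 hT) hn
    rw [Int.card_Icc] at h2
    have h4 : (⌊b⌋ : ℤ) + 1 - ⌈a⌉ ≤ (n : ℤ) := by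
      have := Int.toNat_of_nonneg (a := ⌊b⌋ + 1 - ⌈a⌉) (by omega)
      omega
    have hb1 := Int.lt_floor_add_one b
    have ha1 := Int.ceil_lt_add_one a
    have h4' : ((⌊b⌋ : ℝ)) + 1 - (⌈a⌉ : ℝ) ≤ (n : ℝ) := by exact_mod_cast h4
    linarith
  · have h5 : ((⌊b⌋ : ℝ)) + 1 ≤ (⌈a⌉ : ℝ) := by exact_mod_cast (by omega : (⌊b⌋ : ℤ) + 1 ≤ ⌈a⌉)
    have hb1 := Int.lt_floor_add_one b
    have ha1 := Int.ceil_lt_add_one a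
    have hn0 : (0 : ℝ) ≤ n := Nat.cast_nonneg n
    linarith

lemma pos_sub_neg (a : ℝ) : max a 0 - max (-a) 0 = a := by
  rcases le_total a 0 with h | h
  · rw [max_eq_right h, max_eq_left (neg_nonneg.mpr h)]; ring
  · rw [max_eq_left h, max_eq_right (neg_nonpos.mpr h)]; ring

lemma pos_add_neg (a : ℝ) : max a 0 + max (-a) 0 = |a| := by
  rcases le_total a 0 with h | h
  · simp [max_eq_right h, abs_of_nonpos h, max_eq_left (neg_nonneg.mpr h)]
  · simp [max_eq_left h, abs_of_nonneg h, max_eq_right (neg_nonpos.mpr h)]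

end NFL

set_option maxHeartbeats 1600000 in
/-- A non-hollow lattice polytope has only finitely many equivalence classes of lifts
of bounded size. -/
theorem nonhollow_finitely_many_lifts (d n : ℕ) (Q : Set (Fin d → ℝ))
    (hQ : IsLatticePolytope Q) (hfull : affineSpan ℝ Q = ⊤)
    (hnh : ∃ x : Fin d → ℤ, ratl x ∈ interior Q) :
    ∃ S : Set (Set (Fin (d+1) → ℝ)), S.Finite ∧
      ∀ P : Set (Fin (d+1) → ℝ), IsLatticePolytope P → affineSpan ℝ P = ⊤ →
        latticeSize P ≤ n → proj '' P = Q →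
        ∃ P₀ ∈ S, LiftEquiv P P₀ := by
  classical
  obtain ⟨wz, hwz⟩ := hnh
  set wr : Fin d → ℝ := ratl wz with hwr
  obtain ⟨ε₀, hε₀, hball₀⟩ := Metric.mem_nhds_iff.mp (mem_interior_iff_mem_nhds.mp hwz)
  set ε : ℝ := ε₀ / 2 with hεdef
  have hε : 0 < ε := by positivity
  have hball : Metric.closedBall wr ε ⊆ Q :=
    (Metric.closedBall_subset_ball (by rw [hεdef]; linarith)).trans hball₀
  have hwQ : wr ∈ Q := hball (Metric.mem_closedBall_self hε.le)
  have hQbd : Bornology.IsBounded Q := by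
    obtain ⟨VQ, hVQne, hQV⟩ := hQ
    rw [hQV]
    exact isBounded_convexHull.mpr (Set.toFinite _).isBounded
  obtain ⟨D₀, hD₀⟩ := hQbd.subset_closedBall wr
  set D : ℝ := max D₀ 1 with hDdef
  have hD : 0 < D := lt_of_lt_of_le one_pos (le_max_right _ _)
  have hQD : Q ⊆ Metric.closedBall wr D :=
    hD₀.trans (Metric.closedBall_subset_closedBall (le_max_left _ _))
  set W : ℝ := ‖wr‖ with hWdef
  have hW : 0 ≤ W := norm_nonneg _
  set C3 : ℝ := 2 * ((n : ℝ) + 1) * (1 + 2 * (d : ℝ)) with hC3def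
  have hC3 : 0 ≤ C3 := by positivity
  set μ : ℝ := ε / D with hμdef
  have hμ : 0 < μ := by positivity
  set lam : ℝ := μ / (1 + μ) with hlamdef
  have hlam0 : 0 < lam := by positivity
  have hlam1 : lam < 1 := by rw [hlamdef, div_lt_one (by positivity)]; linarith
  set C4 : ℝ := ((n : ℝ) + 1 + C3) / lam with hC4def
  have hC4 : 0 ≤ C4 := by positivity
  obtain ⟨N, hN⟩ := exists_int_gt (max (W + D) (C4 + (d : ℝ) * (W + D) / 2 + 1))
  have hN1 : W + D < (N : ℝ) := lt_of_le_of_lt (le_max_left _ _) hN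
  have hN2 : C4 + (d : ℝ) * (W + D) / 2 + 1 < (N : ℝ) := lt_of_le_of_lt (le_max_right _ _) hN
  set F : Finset (Fin (d+1) → ℤ) := Finset.Icc (fun _ => -N) (fun _ => N) with hFdef
  refine ⟨(fun (Wf : Finset (Fin (d+1) → ℤ)) => convexHull ℝ (ratl '' ↑Wf)) '' ↑F.powerset,
    F.powerset.finite_toSet.image _, ?_⟩
  rintro P ⟨V, hVne, hPV⟩ _ hPsize hPproj
  have hPconv : Convex ℝ P := hPV ▸ convex_convexHull ℝ _
  have fib_ne : ∀ y ∈ Q, ∃ t, t ∈ NFL.hts P y := by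
    intro y hy
    rw [← hPproj] at hy
    obtain ⟨x, hx, hxy⟩ := hy
    exact ⟨x (Fin.last d), by
      rw [NFL.hts, Set.mem_setOf_eq, ← hxy, NFL.snoc_proj]; exact hx⟩
  set LPset : Set (Fin (d+1) → ℤ) := {z | ratl z ∈ P} with hLP
  have hsize : LPset.ncard ≤ n := hPsize
  have hLPfin : LPset.Finite := by
    have hPbd : Bornology.IsBounded P := by
      rw [hPV]; exact isBounded_convexHull.mpr (Set.toFinite _).isBounded
    obtain ⟨B, hB⟩ := hPbd.subset_closedBall 0
    apply Set.Finite.subset (Set.Finite.pi (fun _ : Fin (d+1) => Set.finite_Icc (-⌈B⌉) ⌈B⌉))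
    intro z hz
    have h1 : dist (ratl z) 0 ≤ B := hB hz
    simp only [Set.mem_pi, Set.mem_univ, forall_true_left, Set.mem_Icc]
    intro k
    have h2 : |(z k : ℝ)| ≤ B := by
      have h3 := dist_le_pi_dist (ratl z) 0 k
      rw [Pi.zero_apply, Real.dist_eq, sub_zero] at h3
      exact h3.trans h1
    have hBc := Int.le_ceil B
    constructor
    · exact_mod_cast (by push_cast; linarith [(abs_le.mp h2).1] : ((-⌈B⌉ : ℤ) : ℝ) ≤ (z k : ℝ))
    · exact_mod_cast (by push_cast; linarith [(abs_le.mp h2).2] : ((z k : ℤ) : ℝ) ≤ ((⌈B⌉ : ℤ) : ℝ))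
  have oneSide : ∀ t ∈ NFL.hts P wr, ∀ t' ∈ NFL.hts P wr, t' - t ≤ (n : ℝ) + 1 := by
    intro t ht t' ht'
    rcases le_total t' t with h | h
    · have : (0 : ℝ) ≤ (n : ℝ) + 1 := by positivity
      linarith
    · set T : Set ℤ := (fun k : ℤ => (Fin.snoc wz k : Fin (d+1) → ℤ)) ⁻¹' LPset with hT
      have hinj : Function.Injective (fun k : ℤ => (Fin.snoc wz k : Fin (d+1) → ℤ)) := by
        intro k k' hkk
        have := congrFun hkk (Fin.last d)
        simpa using this
      have hTfin : T.Finite := hLPfin.preimage hinj.injOn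
      have hTcard : T.ncard ≤ n := by
        calc T.ncard = ((fun k : ℤ => (Fin.snoc wz k : Fin (d+1) → ℤ)) '' T).ncard :=
              (Set.ncard_image_of_injective T hinj).symm
          _ ≤ LPset.ncard := Set.ncard_le_ncard (Set.image_preimage_subset _ _) hLPfin
          _ ≤ n := hsize
      refine NFL.int_count T hTfin hTcard ?_
      intro k hk1 hk2
      have hkH : (k : ℝ) ∈ NFL.hts P wr := by
        have hconn := (NFL.hts_convex hPconv wr).ordConnected
        exact hconn.out ht ht' ⟨hk1, hk2⟩
      show (Fin.snoc wz k : Fin (d+1) → ℤ) ∈ LPset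
      rw [hLP, Set.mem_setOf_eq, NFL.ratl_snoc]
      exact hkH
  have fiberW : ∀ t ∈ NFL.hts P wr, ∀ t' ∈ NFL.hts P wr, |t - t'| ≤ (n : ℝ) + 1 :=
    fun t ht t' ht' => abs_sub_le_iff.mpr ⟨oneSide t' ht' t ht, oneSide t ht t' ht'⟩
  have coordDist : ∀ (y y' : Fin d → ℝ) (r : ℝ), dist y y' ≤ r → ∀ k, |y k - y' k| ≤ r := by
    intro y y' r h k
    have := dist_le_pi_dist y y' k
    rw [Real.dist_eq] at this
    exact this.trans h
  have fiberBall : ∀ y ∈ Metric.closedBall wr ε, ∀ t ∈ NFL.hts P y, ∀ t' ∈ NFL.hts P y,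
      |t - t'| ≤ 2 * ((n : ℝ) + 1) := by
    intro y hy t ht t' ht'
    set ρ : Fin d → ℝ := fun k => 2 * wr k - y k with hρ
    have hρball : ρ ∈ Metric.closedBall wr ε := by
      rw [Metric.mem_closedBall, dist_pi_le_iff hε.le]
      intro k
      have := coordDist y wr ε (Metric.mem_closedBall.mp hy) k
      rw [Real.dist_eq]
      rw [show ρ k - wr k = -(y k - wr k) from by rw [hρ]; ring, abs_neg]
      exact this
    obtain ⟨r, hr⟩ := fib_ne ρ (hball hρball)
    have mid : ∀ s, s ∈ NFL.hts P y → (s + r) / 2 ∈ NFL.hts P wr := by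
      intro s hsP
      have h := NFL.comb_mem_hts hPconv (ι := Bool)
        (fun _ => (1 : ℝ)/2) (fun b => if b then y else ρ) (fun b => if b then s else r)
        (fun _ => by norm_num) (by rw [Fintype.sum_bool]; norm_num)
        (fun b => by cases b <;> simp [hr, hsP])
      have hy2 : (∑ b : Bool, ((1 : ℝ)/2) • (if b then y else ρ)) = wr := by
        rw [Fintype.sum_bool]
        funext k
        simp [hρ]
        ring
      have ht2 : (∑ b : Bool, (1 : ℝ)/2 * (if b then s else r)) = (s + r)/2 := by
        rw [Fintype.sum_bool]
        norm_num
        ring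
      rw [hy2, ht2] at h
      exact h
    have h1 := mid t ht
    have h2 := mid t' ht'
    have h3 := fiberW _ h1 _ h2
    rw [show (t + r)/2 - (t' + r)/2 = (t - t')/2 from by ring] at h3
    rw [abs_div] at h3
    rw [show |(2:ℝ)| = 2 from by norm_num] at h3
    linarith [(div_le_iff₀ (by norm_num : (0:ℝ) < 2)).mp h3]
  -- base heights
  obtain ⟨hw, hhw⟩ := fib_ne wr hwQ
  set u : Fin d → Fin d → ℝ := fun i k => wr k + if i = k then ε else 0 with hu
  have huball : ∀ i, u i ∈ Metric.closedBall wr ε := by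
    intro i
    rw [Metric.mem_closedBall, dist_pi_le_iff hε.le]
    intro k
    rw [Real.dist_eq, hu]
    by_cases h : i = k
    · simp [h, abs_of_nonneg hε.le]
    · simp [h, hε.le]
  choose sv hsv using fun i : Fin d => fib_ne _ (hball (huball i))
  set g : Fin d → ℝ := fun i => (sv i - hw) / ε with hg
  set Lf : (Fin d → ℝ) → ℝ := fun y => hw + ∑ i, g i * (y i - wr i) with hLf
  have claimA : ∀ p ∈ Metric.closedBall wr ε, ∀ s ∈ NFL.hts P p, |s - Lf p| ≤ C3 := by
    intro p hp s hs
    set β : Fin d → ℝ := fun i => (p i - wr i) / ε with hβdef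
    have hβ1 : ∀ i, |β i| ≤ 1 := by
      intro i
      have h1 := coordDist p wr ε (Metric.mem_closedBall.mp hp) i
      rw [hβdef, abs_div, abs_of_pos hε, div_le_one hε]
      exact h1
    have hpk : ∀ k, p k = wr k + ε * β k := by
      intro k; rw [hβdef]; field_simp; ring
    set M : ℝ := 1 + ∑ i, |β i| with hM
    have hM1 : 1 ≤ M := by
      rw [hM]
      have := Finset.sum_nonneg (fun i (_ : i ∈ Finset.univ) => abs_nonneg (β i))
      linarith
    have hM0 : 0 < M := lt_of_lt_of_le one_pos hM1
    have hsplit : ∑ i, |β i| = (∑ i, max (β i) 0) + (∑ i, max (-β i) 0) := by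
      rw [show ∑ i, |β i| = ∑ i, (max (β i) 0 + max (-β i) 0) from
        Finset.sum_congr rfl fun i _ => (NFL.pos_add_neg (β i)).symm, Finset.sum_add_distrib]
    have eM : M = 1 + (∑ i, max (β i) 0) + (∑ i, max (-β i) 0) := by
      rw [hM, show ∑ i, |β i| = ∑ i, (max (β i) 0 + max (-β i) 0) from
        Finset.sum_congr rfl fun i _ => (NFL.pos_add_neg (β i)).symm, Finset.sum_add_distrib]
      ring
    set dA : Fin d ⊕ Bool → ℝ := Sum.elim (fun i => max (-β i) 0)
      (fun b => if b then (∑ i, max (β i) 0) else 1) with hdA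
    set dB : Fin d ⊕ Bool → ℝ := Sum.elim (fun i => max (β i) 0)
      (fun b => if b then (1 + ∑ i, max (-β i) 0) else 0) with hdB
    set ys : Fin d ⊕ Bool → Fin d → ℝ := Sum.elim u (fun b => if b then wr else p) with hys
    set tv : Fin d ⊕ Bool → ℝ := Sum.elim sv (fun b => if b then hw else s) with htv
    have hdA0 : ∀ x, 0 ≤ dA x := by
      rintro (i | b)
      · exact le_max_right _ _
      · cases b
        · simp [hdA]
        · simp only [hdA, Sum.elim_inr, if_true]
          exact Finset.sum_nonneg fun i _ => le_max_right _ _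
    have hdB0 : ∀ x, 0 ≤ dB x := by
      rintro (i | b)
      · exact le_max_right _ _
      · cases b
        · simp [hdB]
        · simp only [hdB, Sum.elim_inr, if_true]
          have := Finset.sum_nonneg (fun i (_ : i ∈ Finset.univ) => le_max_right (-β i) 0)
          linarith
    have hsumA : ∑ x, dA x = M := by
      rw [Fintype.sum_sum_type]
      simp only [hdA, Sum.elim_inl, Sum.elim_inr]
      rw [Fintype.sum_bool]
      rw [eM]
      norm_num
      ring
    have hsumB : ∑ x, dB x = M := by
      rw [Fintype.sum_sum_type]
      simp only [hdB, Sum.elim_inl, Sum.elim_inr]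
      rw [Fintype.sum_bool]
      rw [eM]
      norm_num
      ring
    have hmem : ∀ x, tv x ∈ NFL.hts P (ys x) := by
      rintro (i | b)
      · exact hsv i
      · cases b
        · simpa [htv, hys] using hs
        · simpa [htv, hys] using hhw
    have hAmem := NFL.comb_mem_hts hPconv (fun x => dA x / M) ys tv
      (fun x => div_nonneg (hdA0 x) hM0.le)
      (by rw [← Finset.sum_div, hsumA, div_self hM0.ne']) hmem
    have hBmem := NFL.comb_mem_hts hPconv (fun x => dB x / M) ys tv
      (fun x => div_nonneg (hdB0 x) hM0.le)
      (by rw [← Finset.sum_div, hsumB, div_self hM0.ne']) hmem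
    have expand : ∀ (dd : Fin d ⊕ Bool → ℝ) (v : Fin d ⊕ Bool → ℝ),
        (∑ x, dd x / M * v x) = (∑ x, dd x * v x) / M := by
      intro dd v
      rw [Finset.sum_div]
      exact Finset.sum_congr rfl fun x _ => by ring
    have e1 : ∀ (h : Fin d → ℝ) (k : Fin d), ∑ i, h i * u i k = (∑ i, h i) * wr k + h k * ε := by
      intro h k
      have hterm : ∀ i : Fin d, h i * u i k = h i * wr k + (if i = k then h i * ε else 0) := by
        intro i
        rw [hu]
        by_cases hik : i = k
        · simp [hik]; ring
        · simp [hik]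
      rw [Finset.sum_congr rfl (fun i _ => hterm i), Finset.sum_add_distrib, ← Finset.sum_mul,
        Finset.sum_ite_eq' Finset.univ k (fun i => h i * ε)]
      simp
    set πp : Fin d → ℝ := fun k => wr k + ε * max (β k) 0 / M with hπp
    have hAk : (∑ x, (dA x / M) • ys x) = πp := by
      funext k
      rw [Finset.sum_apply]
      simp only [Pi.smul_apply, smul_eq_mul]
      rw [expand dA (fun x => ys x k), Fintype.sum_sum_type]
      simp only [hdA, hys, Sum.elim_inl, Sum.elim_inr]
      rw [Fintype.sum_bool]
      simp only [Bool.false_eq_true, ↓reduceIte]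
      rw [e1]
      rw [hπp]
      have hnum : (∑ i, max (-β i) 0) * wr k + max (-β k) 0 * ε
          + ((∑ i, max (β i) 0) * wr k + 1 * p k) = M * wr k + ε * max (β k) 0 := by
        rw [hM]
        linear_combination (-(wr k)) * hsplit + hpk k - ε * NFL.pos_sub_neg (β k)
      rw [hnum, add_div, mul_div_cancel_left₀ _ hM0.ne']
    have hBk : (∑ x, (dB x / M) • ys x) = πp := by
      funext k
      rw [Finset.sum_apply]
      simp only [Pi.smul_apply, smul_eq_mul]
      rw [expand dB (fun x => ys x k), Fintype.sum_sum_type]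
      simp only [hdB, hys, Sum.elim_inl, Sum.elim_inr]
      rw [Fintype.sum_bool]
      simp only [Bool.false_eq_true, ↓reduceIte]
      rw [e1]
      rw [hπp]
      have hnum : (∑ i, max (β i) 0) * wr k + max (β k) 0 * ε
          + ((1 + ∑ i, max (-β i) 0) * wr k + 0 * p k) = M * wr k + ε * max (β k) 0 := by
        rw [hM]
        linear_combination (-(wr k)) * hsplit
      rw [hnum, add_div, mul_div_cancel_left₀ _ hM0.ne']
    rw [hAk] at hAmem
    rw [hBk] at hBmem
    have hπball : πp ∈ Metric.closedBall wr ε := by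
      rw [Metric.mem_closedBall, dist_pi_le_iff hε.le]
      intro k
      rw [Real.dist_eq, hπp]
      rw [show wr k + ε * max (β k) 0 / M - wr k = ε * max (β k) 0 / M from by ring]
      have h1 : (0:ℝ) ≤ max (β k) 0 := le_max_right _ _
      have h2 : max (β k) 0 ≤ 1 := max_le ((abs_le.mp (hβ1 k)).2) zero_le_one
      rw [abs_of_nonneg (by positivity), div_le_iff₀ hM0]
      nlinarith
    have hfb := fiberBall πp hπball _ hAmem _ hBmem
    have key : (∑ x, dA x / M * tv x) - (∑ x, dB x / M * tv x) = (s - Lf p) / M := by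
      rw [expand dA tv, expand dB tv, div_sub_div_same]
      congr 1
      rw [Fintype.sum_sum_type, Fintype.sum_sum_type]
      simp only [hdA, hdB, htv, Sum.elim_inl, Sum.elim_inr]
      rw [Fintype.sum_bool, Fintype.sum_bool]
      simp only [Bool.false_eq_true, ↓reduceIte]
      have e2 : ∑ i, max (-β i) 0 * sv i - ∑ i, max (β i) 0 * sv i = - ∑ i, β i * sv i := by
        rw [← Finset.sum_sub_distrib, ← Finset.sum_neg_distrib]
        refine Finset.sum_congr rfl fun i _ => ?_
        linear_combination (-(sv i)) * NFL.pos_sub_neg (β i)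
      have e3 : (∑ i, max (β i) 0) - (∑ i, max (-β i) 0) = ∑ i, β i := by
        rw [← Finset.sum_sub_distrib]
        exact Finset.sum_congr rfl fun i _ => NFL.pos_sub_neg (β i)
      have e4 : Lf p = hw + ∑ i, β i * sv i - (∑ i, β i) * hw := by
        rw [hLf]
        simp only
        have hterm : ∀ i, g i * (p i - wr i) = β i * sv i - β i * hw := by
          intro i
          rw [hg, hβdef]
          field_simp
        rw [Finset.sum_congr rfl (fun i _ => hterm i), Finset.sum_sub_distrib, ← Finset.sum_mul]
        ring
      rw [e4]
      linear_combination e2 + hw * e3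
    have habs : |s - Lf p| = M * |(∑ x, dA x / M * tv x) - (∑ x, dB x / M * tv x)| := by
      rw [key, abs_div, abs_of_pos hM0]
      field_simp
    have hMle : M ≤ 1 + 2 * (d : ℝ) := by
      rw [hM]
      have h1 : ∑ i, |β i| ≤ ∑ _i : Fin d, (1:ℝ) := Finset.sum_le_sum (fun i _ => hβ1 i)
      rw [Finset.sum_const, Finset.card_univ, Fintype.card_fin, nsmul_eq_mul, mul_one] at h1
      linarith
    rw [habs]
    calc M * |(∑ x, dA x / M * tv x) - (∑ x, dB x / M * tv x)|
        ≤ (1 + 2 * (d:ℝ)) * (2 * ((n:ℝ) + 1)) :=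
          mul_le_mul hMle hfb (abs_nonneg _) (by positivity)
      _ = C3 := by rw [hC3def]; ring
  have main : ∀ x ∈ P, |x (Fin.last d) - Lf (proj x)| ≤ C4 := by
    intro x hx
    set y : Fin d → ℝ := proj x with hy
    have hyQ : y ∈ Q := by rw [← hPproj]; exact ⟨x, hx, rfl⟩
    have hyD : dist y wr ≤ D := Metric.mem_closedBall.mp (hQD hyQ)
    set p : Fin d → ℝ := fun k => wr k + μ * (wr k - y k) with hp
    have hpball : p ∈ Metric.closedBall wr ε := by
      rw [Metric.mem_closedBall, dist_pi_le_iff hε.le]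
      intro k
      have hk : |wr k - y k| ≤ D := by
        have := coordDist y wr D hyD k
        rw [abs_sub_comm] at this
        exact this
      rw [Real.dist_eq, show p k - wr k = μ * (wr k - y k) from by rw [hp]; ring, abs_mul,
        abs_of_pos hμ]
      calc μ * |wr k - y k| ≤ μ * D := mul_le_mul_of_nonneg_left hk hμ.le
        _ = ε := by rw [hμdef]; field_simp
    obtain ⟨sp, hsp⟩ := fib_ne p (hball hpball)
    have hcomb := NFL.comb_mem_hts hPconv (ι := Bool)
      (fun b => if b then lam else 1 - lam) (fun b => if b then y else p)
      (fun b => if b then x (Fin.last d) else sp)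
      (fun b => by cases b <;> simp [Bool.false_eq_true, hlam0.le] <;> linarith)
      (by rw [Fintype.sum_bool]; simp [Bool.false_eq_true])
      (fun b => by
        cases b
        · simpa [Bool.false_eq_true] using hsp
        · simp only [↓reduceIte]
          show x (Fin.last d) ∈ NFL.hts P y
          rw [NFL.hts, Set.mem_setOf_eq, hy, NFL.snoc_proj]
          exact hx)
    have hyp : ∀ k, lam * y k + (1 - lam) * p k = wr k := by
      intro k
      rw [hp]
      simp only
      rw [hlamdef]
      have h1 : (0:ℝ) < 1 + μ := by positivity
      field_simp
      ring
    have hbase : (∑ b : Bool, (if b then lam else 1 - lam) • (if b then y else p)) = wr := by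
      rw [Fintype.sum_bool]
      funext k
      simp only [Bool.false_eq_true, ↓reduceIte, Pi.add_apply, Pi.smul_apply, smul_eq_mul]
      exact hyp k
    have hsum' : (∑ b : Bool, (if b then lam else 1 - lam) * (if b then x (Fin.last d) else sp))
        = lam * x (Fin.last d) + (1 - lam) * sp := by
      rw [Fintype.sum_bool]
      simp [Bool.false_eq_true]
    rw [hbase, hsum'] at hcomb
    have h1 := fiberW _ hcomb _ hhw
    have h2 := claimA p hpball sp hsp
    have hLfaff : lam * Lf y + (1 - lam) * Lf p = hw := by
      rw [hLf]
      simp only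
      have hterm : ∀ i, lam * (g i * (y i - wr i)) + (1 - lam) * (g i * (p i - wr i)) = 0 := by
        intro i
        linear_combination g i * (hyp i)
      have hsum0 : ∑ i, (lam * (g i * (y i - wr i)) + (1 - lam) * (g i * (p i - wr i))) = 0 := by
        rw [Finset.sum_congr rfl (fun i _ => hterm i)]
        simp
      have e7 : ∑ i, lam * (g i * (y i - wr i)) = lam * ∑ i, g i * (y i - wr i) :=
        (Finset.mul_sum _ _ _).symm
      have e8 : ∑ i, (1 - lam) * (g i * (p i - wr i)) = (1 - lam) * ∑ i, g i * (p i - wr i) :=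
        (Finset.mul_sum _ _ _).symm
      rw [Finset.sum_add_distrib, e7, e8] at hsum0
      linear_combination hsum0
    have key2 : lam * (x (Fin.last d) - Lf y)
        = (lam * x (Fin.last d) + (1 - lam) * sp - hw) - (1 - lam) * (sp - Lf p) := by
      linear_combination -hLfaff
    have hbound : |lam * (x (Fin.last d) - Lf y)| ≤ (n : ℝ) + 1 + C3 := by
      rw [key2]
      calc |(lam * x (Fin.last d) + (1 - lam) * sp - hw) - (1 - lam) * (sp - Lf p)|
          ≤ |lam * x (Fin.last d) + (1 - lam) * sp - hw| + |(1 - lam) * (sp - Lf p)| :=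
            abs_sub _ _
        _ ≤ ((n : ℝ) + 1) + C3 := by
            have h3 : |(1 - lam) * (sp - Lf p)| ≤ C3 := by
              rw [abs_mul, abs_of_nonneg (by linarith : (0:ℝ) ≤ 1 - lam)]
              calc (1 - lam) * |sp - Lf p| ≤ 1 * |sp - Lf p| :=
                    mul_le_mul_of_nonneg_right (by linarith) (abs_nonneg _)
                _ = |sp - Lf p| := one_mul _
                _ ≤ C3 := h2
            linarith
    rw [abs_mul, abs_of_pos hlam0] at hbound
    rw [hC4def, le_div_iff₀ hlam0]
    linarith
  -- the unimodular transformation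
  set c : Fin d → ℤ := fun i => round (g i) with hc
  set K : ℝ := hw - ∑ i, g i * wr i with hK
  set mval : ℤ := ⌊K⌋ with hm
  set Amat : Matrix (Fin (d+1)) (Fin (d+1)) ℤ := Matrix.of fun i j =>
    if i = Fin.last d then (if j = Fin.last d then 1 else - (Fin.snoc c 0 : Fin (d+1) → ℤ) j)
    else if j = i then 1 else 0 with hA
  set bvec : Fin (d+1) → ℤ := Fin.snoc (0 : Fin d → ℤ) (-mval) with hbv
  have hdet : IsUnit Amat.det := by
    have htri : Amat.BlockTriangular ⇑OrderDual.toDual := by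
      intro i j hij
      have hij' : i < j := hij
      have hine : i ≠ Fin.last d := by
        intro h
        rw [h] at hij'
        exact absurd hij' (not_lt.2 (Fin.le_last j))
      rw [hA]
      simp only [Matrix.of_apply]
      rw [if_neg hine, if_neg (ne_of_gt hij')]
    rw [Matrix.det_of_lowerTriangular Amat htri]
    have hdiag : ∀ i, Amat i i = 1 := by
      intro i
      by_cases h : i = Fin.last d <;> simp [hA, h]
    rw [Finset.prod_congr rfl (fun i _ => hdiag i)]
    simp
  have affEval : ∀ x : Fin (d+1) → ℝ, affMap Amat bvec x =
      Fin.snoc (proj x) (x (Fin.last d) - (∑ i, (c i : ℝ) * x i.castSucc) - (mval : ℝ)) := by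
    intro x
    funext k
    induction k using Fin.lastCases with
    | last =>
      have hAe : ∀ j : Fin d, Amat (Fin.last d) (Fin.castSucc j) = - c j := by
        intro j
        rw [hA]
        simp [Matrix.of_apply, (Fin.castSucc_lt_last j).ne]
      have hAl : Amat (Fin.last d) (Fin.last d) = 1 := by rw [hA]; simp
      have hbl : bvec (Fin.last d) = -mval := by rw [hbv]; simp
      simp only [affMap, Pi.add_apply, Matrix.mulVec, dotProduct, Matrix.map_apply, ratl,
        Fin.snoc_last]
      rw [Fin.sum_univ_castSucc]
      rw [Finset.sum_congr rfl (fun j (_ : j ∈ Finset.univ) => by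
        rw [hAe j]; push_cast; ring :
        ∀ j ∈ Finset.univ, ((Amat (Fin.last d) (Fin.castSucc j) : ℤ) : ℝ) * x (Fin.castSucc j)
          = -((c j : ℝ) * x (Fin.castSucc j)))]
      rw [hAl, hbl]
      push_cast
      rw [Finset.sum_neg_distrib]
      ring
    | cast j' =>
      simp only [affMap, Pi.add_apply, Matrix.mulVec, dotProduct, Matrix.map_apply, ratl]
      have hne : Fin.castSucc j' ≠ Fin.last d := (Fin.castSucc_lt_last j').ne
      have hterm : ∀ j : Fin (d+1), ((Amat (Fin.castSucc j') j : ℤ) : ℝ) * x j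
          = (if j = Fin.castSucc j' then x j else 0) := by
        intro j
        by_cases h : j = Fin.castSucc j'
        · rw [hA]; simp [Matrix.of_apply, if_neg hne, h]
        · rw [hA]; simp [Matrix.of_apply, if_neg hne, h]
      rw [Finset.sum_congr rfl (fun j _ => hterm j),
        Finset.sum_ite_eq' Finset.univ (Fin.castSucc j') (fun j => x j)]
      simp [hbv, Fin.snoc_castSucc, proj]
  have projEq : ∀ x : Fin (d+1) → ℝ, proj (affMap Amat bvec x) = proj x := by
    intro x
    rw [affEval x, NFL.proj_snoc]
  set intMap : (Fin (d+1) → ℤ) → (Fin (d+1) → ℤ) := fun z => Amat.mulVec z + bvec with hintMap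
  have castMap : ∀ z : Fin (d+1) → ℤ, affMap Amat bvec (ratl z) = ratl (intMap z) := by
    intro z
    funext k
    simp only [affMap, hintMap, Pi.add_apply, Matrix.mulVec, dotProduct, Matrix.map_apply, ratl]
    push_cast
    ring
  set fa : (Fin (d+1) → ℝ) →ᵃ[ℝ] (Fin (d+1) → ℝ) :=
    { toFun := affMap Amat bvec
      linear := (Amat.map (Int.cast : ℤ → ℝ)).mulVecLin
      map_vadd' := by
        intro p v
        simp only [vadd_eq_add, affMap, Matrix.mulVecLin_apply, Matrix.mulVec_add]
        abel } with hfa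
  have himage : affMap Amat bvec '' P = convexHull ℝ (ratl '' ↑(V.image intMap)) := by
    have h1 : affMap Amat bvec '' P = ⇑fa '' (convexHull ℝ (ratl '' ↑V)) := by rw [hPV]; rfl
    rw [h1, fa.image_convexHull]
    congr 1
    have hfuneq : (⇑fa ∘ ratl : (Fin (d+1) → ℤ) → (Fin (d+1) → ℝ)) = ratl ∘ intMap :=
      funext fun z => castMap z
    calc ⇑fa '' (ratl '' (↑V : Set (Fin (d+1) → ℤ))) = (⇑fa ∘ ratl) '' ↑V :=
          (Set.image_comp _ _ _).symm
      _ = (ratl ∘ intMap) '' ↑V := by rw [hfuneq]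
      _ = ratl '' (intMap '' ↑V) := Set.image_comp _ _ _
      _ = ratl '' ↑(V.image intMap) := by rw [Finset.coe_image]
  have hbox : ∀ v ∈ V, intMap v ∈ F := by
    intro v hv
    have hvP : ratl v ∈ P := by
      rw [hPV]
      exact subset_convexHull ℝ _ ⟨v, hv, rfl⟩
    have hcast : ratl (intMap v) = Fin.snoc (proj (ratl v))
        ((ratl v) (Fin.last d) - (∑ i, (c i : ℝ) * (ratl v) i.castSucc) - (mval : ℝ)) := by
      rw [← castMap, affEval]
    set yv : Fin d → ℝ := proj (ratl v) with hyv
    have hyQ : yv ∈ Q := by rw [← hPproj]; exact ⟨ratl v, hvP, rfl⟩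
    have hyD : dist yv wr ≤ D := Metric.mem_closedBall.mp (hQD hyQ)
    have hycoord : ∀ j, |yv j| ≤ W + D := by
      intro j
      have h1 : |yv j - wr j| ≤ D := coordDist yv wr D hyD j
      have h2 : |wr j| ≤ W := by
        have := norm_le_pi_norm wr j
        simpa [Real.norm_eq_abs, hWdef] using this
      calc |yv j| = |(yv j - wr j) + wr j| := by ring_nf
        _ ≤ |yv j - wr j| + |wr j| := abs_add_le _ _
        _ ≤ W + D := by linarith
    have hcoordR : ∀ k, |(ratl (intMap v)) k| ≤ (N : ℝ) := by
      intro k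
      rw [hcast]
      induction k using Fin.lastCases with
      | last =>
        rw [Fin.snoc_last]
        have hmain := main (ratl v) hvP
        have hdec : (ratl v) (Fin.last d) - (∑ i, (c i : ℝ) * (ratl v) i.castSucc) - (mval : ℝ)
            = ((ratl v) (Fin.last d) - Lf yv) + (∑ i, (g i - (c i : ℝ)) * yv i) + (K - mval) := by
          rw [hLf, hK]
          simp only
          have hcy : ∀ i, (c i : ℝ) * (ratl v) i.castSucc = (c i : ℝ) * yv i := by
            intro i
            rw [hyv]
            rfl
          rw [Finset.sum_congr rfl (fun i _ => hcy i)]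
          have e5 : ∑ i, (g i - (c i : ℝ)) * yv i
              = ∑ i, g i * yv i - ∑ i, (c i : ℝ) * yv i := by
            rw [← Finset.sum_sub_distrib]
            exact Finset.sum_congr rfl fun i _ => by ring
          have e6 : ∑ i, g i * (yv i - wr i) = ∑ i, g i * yv i - ∑ i, g i * wr i := by
            rw [← Finset.sum_sub_distrib]
            exact Finset.sum_congr rfl fun i _ => by ring
          rw [e5, e6]
          ring
        rw [hdec]
        have hb1 : |(ratl v) (Fin.last d) - Lf yv| ≤ C4 := hmain
        have hb2 : |∑ i, (g i - (c i : ℝ)) * yv i| ≤ (d : ℝ) * (W + D) / 2 := by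
          calc |∑ i, (g i - (c i : ℝ)) * yv i| ≤ ∑ i, |(g i - (c i : ℝ)) * yv i| :=
                Finset.abs_sum_le_sum_abs _ _
            _ ≤ ∑ _i : Fin d, (1/2) * (W + D) := by
                refine Finset.sum_le_sum fun i _ => ?_
                rw [abs_mul]
                refine mul_le_mul ?_ (hycoord i) (abs_nonneg _) (by norm_num)
                rw [hc]
                exact abs_sub_round (g i)
            _ = (d : ℝ) * (W + D) / 2 := by
                rw [Finset.sum_const, Finset.card_univ, Fintype.card_fin, nsmul_eq_mul]
                ring
        have hb3 : |K - (mval : ℝ)| ≤ 1 := by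
          rw [hm]
          have h1 := Int.floor_le K
          have h2 := Int.lt_floor_add_one K
          rw [abs_le]
          constructor <;> linarith
        calc |((ratl v) (Fin.last d) - Lf yv) + (∑ i, (g i - (c i : ℝ)) * yv i) + (K - mval)|
            ≤ |(ratl v) (Fin.last d) - Lf yv| + |∑ i, (g i - (c i : ℝ)) * yv i| + |K - (mval:ℝ)| :=
              abs_add_three _ _ _
          _ ≤ C4 + (d : ℝ) * (W + D) / 2 + 1 := by linarith
          _ ≤ (N : ℝ) := hN2.le
      | cast j =>
        rw [Fin.snoc_castSucc]
        exact (hycoord j).trans hN1.le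
    rw [hFdef, Finset.mem_Icc]
    constructor <;> rw [Pi.le_def] <;> intro k
    · have h := (abs_le.mp (hcoordR k)).1
      rw [show (ratl (intMap v)) k = ((intMap v k : ℤ) : ℝ) from rfl] at h
      exact_mod_cast h
    · have h := (abs_le.mp (hcoordR k)).2
      rw [show (ratl (intMap v)) k = ((intMap v k : ℤ) : ℝ) from rfl] at h
      exact_mod_cast h
  refine ⟨convexHull ℝ (ratl '' ↑(V.image intMap)), ?_, ?_⟩
  · exact ⟨V.image intMap, by
      rw [Finset.mem_coe, Finset.mem_powerset]
      exact Finset.image_subset_iff.mpr hbox, rfl⟩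
  · exact ⟨Amat, bvec, hdet, himage, fun x _ => projEq x⟩
end
end

section
/- The hollow 3-polytope Q = conv{(0,0,0),(1,0,0),(0,1,0),(0,0,1),(2,2,3)} has lattice width exactly 2. -/
open Set MeasureTheory

noncomputable section

/-- The hollow 3-polytope projecting from the Haase–Ziegler family. -/
def QHZ : Set (Fin 3 → ℝ) :=
  convexHull ℝ {![0,0,0], ![1,0,0], ![0,1,0], ![0,0,1], ![(2:ℝ),2,3]}

def f3 (l : Fin 3 → ℤ) (p : Fin 3 → ℝ) : ℝ := ∑ i, (l i : ℝ) * p i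

def verts : Set (Fin 3 → ℝ) := {![0,0,0], ![1,0,0], ![0,1,0], ![0,0,1], ![(2:ℝ),2,3]}

lemma QHZ_eq : QHZ = convexHull ℝ verts := rfl

lemma verts_finite : verts.Finite :=
  ((((Set.finite_singleton _).insert _).insert _).insert _).insert _

lemma compactQ : IsCompact QHZ := by
  rw [QHZ_eq]; exact verts_finite.isCompact_convexHull ℝ

lemma f3_linear (l : Fin 3 → ℤ) : IsLinearMap ℝ (f3 l) := by
  constructor
  · intro x y; simp [f3, mul_add, Finset.sum_add_distrib]
  · intro c x
    simp only [f3, Pi.smul_apply, smul_eq_mul, Finset.mul_sum]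
    exact Finset.sum_congr rfl fun i _ => by ring

lemma mem_QHZ_of_verts {x : Fin 3 → ℝ} (hx : x ∈ verts) : x ∈ QHZ :=
  subset_convexHull ℝ _ hx

lemma sum_eq (l : Fin 3 → ℤ) (p q : Fin 3 → ℝ) :
    ∑ i, (l i : ℝ) * (p i - q i) = f3 l p - f3 l q := by
  simp [f3, mul_sub, Finset.sum_sub_distrib]

lemma bddS (l : Fin 3 → ℤ) : BddAbove ((fun pq : (Fin 3 → ℝ) × (Fin 3 → ℝ) =>
    |∑ i, (l i : ℝ) * (pq.1 i - pq.2 i)|) '' (QHZ ×ˢ QHZ)) := by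
  have hc : IsCompact ((fun pq : (Fin 3 → ℝ) × (Fin 3 → ℝ) =>
      |∑ i, (l i : ℝ) * (pq.1 i - pq.2 i)|) '' (QHZ ×ˢ QHZ)) :=
    (compactQ.prod compactQ).image (by fun_prop)
  exact hc.bddAbove

lemma widthF_ge (l : Fin 3 → ℤ) {p q : Fin 3 → ℝ} (hp : p ∈ QHZ) (hq : q ∈ QHZ) :
    |f3 l p - f3 l q| ≤ widthF QHZ l :=
  le_csSup (bddS l) ⟨(p, q), Set.mk_mem_prod hp hq, by simp [sum_eq]⟩

lemma cast_abs_ge {x : ℤ} (h : 2 ≤ x.natAbs) : (2:ℝ) ≤ |(x:ℝ)| := by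
  rw [← Int.cast_abs]
  exact_mod_cast (by rw [Int.abs_eq_natAbs]; omega : (2:ℤ) ≤ |x|)

lemma lower (l : Fin 3 → ℤ) (hl : l ≠ 0) : 2 ≤ widthF QHZ l := by
  have h0 : ![(0:ℝ),0,0] ∈ QHZ := mem_QHZ_of_verts (by simp [verts])
  have h1 : ![(1:ℝ),0,0] ∈ QHZ := mem_QHZ_of_verts (by simp [verts])
  have h2 : ![(0:ℝ),1,0] ∈ QHZ := mem_QHZ_of_verts (by simp [verts])
  have h3 : ![(0:ℝ),0,1] ∈ QHZ := mem_QHZ_of_verts (by simp [verts])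
  have h4 : ![(2:ℝ),2,3] ∈ QHZ := mem_QHZ_of_verts (by simp [verts])
  set a := l 0 with ha
  set b := l 1 with hb
  set c := l 2 with hc
  have hne : ¬(a = 0 ∧ b = 0 ∧ c = 0) := by
    rintro ⟨u, v, w⟩
    exact hl (funext fun i => by fin_cases i <;> assumption)
  have key : 2 ≤ a.natAbs ∨ 2 ≤ b.natAbs ∨ 2 ≤ c.natAbs ∨
      2 ≤ (2*a+2*b+3*c).natAbs ∨ 2 ≤ (a-b).natAbs ∨ 2 ≤ (a-c).natAbs ∨
      2 ≤ (b-c).natAbs ∨ 2 ≤ (a-(2*a+2*b+3*c)).natAbs ∨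
      2 ≤ (b-(2*a+2*b+3*c)).natAbs ∨ 2 ≤ (c-(2*a+2*b+3*c)).natAbs := by omega
  rcases key with h|h|h|h|h|h|h|h|h|h
  · refine le_trans ?_ (widthF_ge l h1 h0)
    have e : f3 l ![(1:ℝ),0,0] - f3 l ![0,0,0] = ((a : ℤ) : ℝ) := by
      simp [f3, Fin.sum_univ_three]; rfl
    rw [e]; exact cast_abs_ge h
  · refine le_trans ?_ (widthF_ge l h2 h0)
    have e : f3 l ![(0:ℝ),1,0] - f3 l ![0,0,0] = ((b : ℤ) : ℝ) := by
      simp [f3, Fin.sum_univ_three]; rfl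
    rw [e]; exact cast_abs_ge h
  · refine le_trans ?_ (widthF_ge l h3 h0)
    have e : f3 l ![(0:ℝ),0,1] - f3 l ![0,0,0] = ((c : ℤ) : ℝ) := by
      simp [f3, Fin.sum_univ_three]; rfl
    rw [e]; exact cast_abs_ge h
  · refine le_trans ?_ (widthF_ge l h4 h0)
    have e : f3 l ![(2:ℝ),2,3] - f3 l ![0,0,0] = ((2*a+2*b+3*c : ℤ) : ℝ) := by
      simp [f3, Fin.sum_univ_three]; push_cast; ring
    rw [e]; exact cast_abs_ge h
  · refine le_trans ?_ (widthF_ge l h1 h2)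
    have e : f3 l ![(1:ℝ),0,0] - f3 l ![0,1,0] = ((a-b : ℤ) : ℝ) := by
      simp [f3, Fin.sum_univ_three]; rfl
    rw [e]; exact cast_abs_ge h
  · refine le_trans ?_ (widthF_ge l h1 h3)
    have e : f3 l ![(1:ℝ),0,0] - f3 l ![0,0,1] = ((a-c : ℤ) : ℝ) := by
      simp [f3, Fin.sum_univ_three]; rfl
    rw [e]; exact cast_abs_ge h
  · refine le_trans ?_ (widthF_ge l h2 h3)
    have e : f3 l ![(0:ℝ),1,0] - f3 l ![0,0,1] = ((b-c : ℤ) : ℝ) := by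
      simp [f3, Fin.sum_univ_three]; rfl
    rw [e]; exact cast_abs_ge h
  · refine le_trans ?_ (widthF_ge l h1 h4)
    have e : f3 l ![(1:ℝ),0,0] - f3 l ![2,2,3] = ((a-(2*a+2*b+3*c) : ℤ) : ℝ) := by
      simp [f3, Fin.sum_univ_three]; push_cast; ring
    rw [e]; exact cast_abs_ge h
  · refine le_trans ?_ (widthF_ge l h2 h4)
    have e : f3 l ![(0:ℝ),1,0] - f3 l ![2,2,3] = ((b-(2*a+2*b+3*c) : ℤ) : ℝ) := by
      simp [f3, Fin.sum_univ_three]; push_cast; ring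
    rw [e]; exact cast_abs_ge h
  · refine le_trans ?_ (widthF_ge l h3 h4)
    have e : f3 l ![(0:ℝ),0,1] - f3 l ![2,2,3] = ((c-(2*a+2*b+3*c) : ℤ) : ℝ) := by
      simp [f3, Fin.sum_univ_three]; push_cast; ring
    rw [e]; exact cast_abs_ge h

def l₀ : Fin 3 → ℤ := ![1,1,-1]

lemma l₀_ne : l₀ ≠ 0 := by
  intro h
  have := congrFun h 0
  simp [l₀] at this

lemma upper : widthF QHZ l₀ ≤ 2 := by
  have hsub : QHZ ⊆ {x | -1 ≤ f3 l₀ x ∧ f3 l₀ x ≤ 1} := by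
    rw [QHZ_eq]
    apply convexHull_min
    · intro x hx
      simp only [verts, Set.mem_insert_iff, Set.mem_singleton_iff] at hx
      rcases hx with rfl|rfl|rfl|rfl|rfl <;>
        constructor <;> norm_num [f3, Fin.sum_univ_three, l₀, Matrix.cons_val_two, Matrix.tail_cons, Matrix.head_cons]
    · exact (convex_halfSpace_ge (f3_linear l₀) (-1)).inter
        (convex_halfSpace_le (f3_linear l₀) 1)
  apply Real.sSup_le
  · rintro x ⟨⟨p, q⟩, hpq, rfl⟩
    obtain ⟨hp, hq⟩ := hpq
    have hp' := hsub hp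
    have hq' := hsub hq
    simp only [Set.mem_setOf_eq] at hp' hq'
    dsimp only
    rw [sum_eq]
    rw [abs_le]
    constructor <;> [linarith [hp'.1, hq'.2]; linarith [hp'.2, hq'.1]]
  · norm_num


/-- Q = conv{0, e₁, e₂, e₃, (2,2,3)} has lattice width exactly 2. -/
theorem QHZ_width_two : latWidth QHZ = 2 := by
  have hlb : ∀ l : {l : Fin 3 → ℤ // l ≠ 0}, 2 ≤ widthF QHZ l.1 := fun l => lower l.1 l.2
  have heq : widthF QHZ l₀ = 2 := le_antisymm upper (lower l₀ l₀_ne)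
  unfold latWidth
  apply le_antisymm
  · exact csInf_le ⟨2, by rintro x ⟨l, rfl⟩; exact hlb l⟩ ⟨⟨l₀, l₀_ne⟩, heq⟩
  · exact le_csInf ⟨2, ⟨⟨l₀, l₀_ne⟩, heq⟩⟩ (by rintro x ⟨l, rfl⟩; exact hlb l)
end
end
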